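/- arXiv:2410.20810 — 8 statements merged into one kernel-verified Lean document; each statement's English description precedes it below -/
import Mathlib

section
/- Let G be a bipartite graph, uv a bisimplicial edge of G, and S a vertex cut of G ⊖ uv (the graph obtained from G by deleting both u and v). If F_i and F_j are two distinct connected components of (G ⊖ uv) − S, then (N_G(u)\{v}) ∩ V(F_i) = ∅ or (N_G(v)\{u}) ∩ V(F_j) = ∅. -/
open SimpleGraph

variable {V : Type*}

/-- `S` is a vertex cut set of `G`: deleting the vertices of `S` disconnects the graph. -/
def SimpleGraph.IsVertexCutSet (G : SimpleGraph V) (S : Set V) : Prop :=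
  ¬ (G.induce Sᶜ).Preconnected

open scoped Classical in
/-- The vertex connectivity of a finite simple graph: the minimum size of a vertex cut if
one exists (i.e. if the graph is not complete), and `|V| - 1` otherwise. -/
noncomputable def SimpleGraph.vertexConnectivity [Finite V] (G : SimpleGraph V) : ℕ :=
  if ∃ S : Set V, G.IsVertexCutSet S then
    sInf {n | ∃ S : Set V, S.ncard = n ∧ G.IsVertexCutSet S}
  else Nat.card V - 1

/-- An edge `uv` is bisimplicial if `N(u) ∪ N(v)` induces a complete bipartite graph
with parts `N(u)` and `N(v)`. -/
def SimpleGraph.IsBisimplicialEdge (G : SimpleGraph V) (u v : V) : Prop :=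
  G.Adj u v ∧ ∀ x y, G.Adj u x → G.Adj v y → x ≠ y → G.Adj x y

/-- A cycle (closed walk) has a chord: an edge of `G` joining two vertices of the cycle
that is not an edge of the cycle. -/
def SimpleGraph.CycleHasChord (G : SimpleGraph V) {a : V} (c : G.Walk a a) : Prop :=
  ∃ x y, x ∈ c.support ∧ y ∈ c.support ∧ G.Adj x y ∧ s(x, y) ∉ c.edges

/-- A graph is chordal bipartite if it is bipartite and every cycle of length at least 6
has a chord. -/
def SimpleGraph.ChordalBipartite (G : SimpleGraph V) : Prop :=
  G.Colorable 2 ∧ ∀ ⦃a : V⦄ (c : G.Walk a a), c.IsCycle → 6 ≤ c.length → G.CycleHasChord c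

theorem stmt3 (G : SimpleGraph V) (hbip : G.Colorable 2) (u v : V)
    (huv : G.IsBisimplicialEdge u v) (S : Set V) (hS : S ⊆ ({u, v} : Set V)ᶜ)
    (hcut : ¬ (G.induce (({u, v} : Set V) ∪ S)ᶜ).Preconnected)
    (c d : (G.induce (({u, v} : Set V) ∪ S)ᶜ).ConnectedComponent) (hcd : c ≠ d) :
    (G.neighborSet u \ {v}) ∩ (Subtype.val '' c.supp) = ∅ ∨
    (G.neighborSet v \ {u}) ∩ (Subtype.val '' d.supp) = ∅ := by
  by_contra h
  push_neg at h
  obtain ⟨x, ⟨hux, hxv⟩, ⟨x', hx'c, hx'eq⟩⟩ := h.1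
  obtain ⟨y, ⟨hvy, hyu⟩, ⟨y', hy'd, hy'eq⟩⟩ := h.2
  have hxy : x ≠ y := by
    rintro rfl
    obtain ⟨C⟩ := hbip
    have h1 : C x ≠ C u := (C.valid hux.symm)
    have h2 : C x ≠ C v := (C.valid hvy.symm)
    have h3 : C u ≠ C v := C.valid huv.1
    have := (C x).isLt; have := (C u).isLt; have := (C v).isLt
    rw [Fin.ne_iff_vne] at h1 h2 h3
    omega
  have hadj : G.Adj x y := huv.2 x y hux hvy hxy
  have hadj' : (G.induce (({u, v} : Set V) ∪ S)ᶜ).Adj x' y' := by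
    subst hx'eq; subst hy'eq
    exact hadj
  have e1 := (SimpleGraph.ConnectedComponent.mem_supp_iff _ _).1 hx'c
  have e2 := (SimpleGraph.ConnectedComponent.mem_supp_iff _ _).1 hy'd
  exact hcd (by rw [← e1, ← e2]; exact SimpleGraph.ConnectedComponent.sound hadj'.reachable)
end

section
/- Let G be a bipartite graph with κ(G) = k ≥ 1 and at least three vertices, let uv be a bisimplicial edge of G, and let S be a vertex cut of G ⊖ uv. Then |S| ≥ k − 1. -/
open SimpleGraph

variable {V : Type*}

/-- auxiliary: reachability in `G` avoiding the set `T`. -/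
def Avoid (G : SimpleGraph V) (T : Set V) (a b : V) : Prop :=
  ∃ p : G.Walk a b, ∀ x ∈ p.support, x ∉ T

lemma avoid_of_reachable {G : SimpleGraph V} {T : Set V} {a b : ↥(Tᶜ : Set V)}
    (h : (G.induce (Tᶜ : Set V)).Reachable a b) : Avoid G T a.val b.val := by
  obtain ⟨p⟩ := h
  induction p with
  | nil =>
    rename_i c
    exact ⟨.nil, by rintro x hx; simp at hx; subst hx; exact c.2⟩
  | @cons x c _ h p ih =>
    obtain ⟨q, hq⟩ := ih
    have hG : G.Adj x.val c.val := h
    refine ⟨.cons hG q, ?_⟩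
    intro z hz
    rw [SimpleGraph.Walk.support_cons, List.mem_cons] at hz
    rcases hz with rfl | hz
    · exact x.2
    · exact hq z hz

lemma reachable_of_avoid {G : SimpleGraph V} {T : Set V} {a b : V}
    (ha : a ∈ (Tᶜ : Set V)) (hb : b ∈ (Tᶜ : Set V)) (h : Avoid G T a b) :
    (G.induce (Tᶜ : Set V)).Reachable ⟨a, ha⟩ ⟨b, hb⟩ := by
  obtain ⟨p, hp⟩ := h
  induction p with
  | nil => rfl
  | @cons x c _ hadj p ih =>
    have hc : c ∈ (Tᶜ : Set V) := hp c (by simp)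
    have h1 : (G.induce (Tᶜ : Set V)).Adj ⟨x, ha⟩ ⟨c, hc⟩ := hadj
    exact (h1.reachable).trans (ih hc hb (fun z hz => hp z (by simp [hz])))

lemma avoid_trans {G : SimpleGraph V} {T : Set V} {a b c : V}
    (h1 : Avoid G T a b) (h2 : Avoid G T b c) : Avoid G T a c := by
  obtain ⟨p, hp⟩ := h1; obtain ⟨q, hq⟩ := h2
  refine ⟨p.append q, ?_⟩
  intro z hz
  rw [SimpleGraph.Walk.mem_support_append_iff] at hz
  rcases hz with hz | hz
  · exact hp z hz
  · exact hq z hz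

/-- Extraction: from a path avoiding `T` passing through `w` (interior), obtain neighbours of
`w` on either side with connecting walks avoiding `insert w T`. -/
lemma extract {G : SimpleGraph V} {T : Set V} {a b w : V} (p : G.Walk a b)
    (hp : p.IsPath) (hT : ∀ x ∈ p.support, x ∉ T) (hw : w ∈ p.support)
    (haw : a ≠ w) (hbw : b ≠ w) :
    ∃ x y, G.Adj w x ∧ G.Adj w y ∧ Avoid G (insert w T) a x ∧ Avoid G (insert w T) y b := by
  classical
  set q1 : G.Walk a w := p.takeUntil w hw with hq1
  set q2 : G.Walk w b := p.dropUntil w hw with hq2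
  have hq1p : q1.IsPath := hp.takeUntil hw
  have hq2p : q2.IsPath := hp.dropUntil hw
  -- decompose q1.reverse = cons
  obtain ⟨x, hadjx, r1, hr1⟩ := SimpleGraph.Walk.exists_eq_cons_of_ne (Ne.symm haw) q1.reverse
  obtain ⟨y, hadjy, r2, hr2⟩ := SimpleGraph.Walk.exists_eq_cons_of_ne (Ne.symm hbw) q2
  have hr1sup : q1.reverse.support = w :: r1.support := by rw [hr1]; simp [SimpleGraph.Walk.support_cons]
  have hr2sup : q2.support = w :: r2.support := by rw [hr2]; simp [SimpleGraph.Walk.support_cons]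
  have hwr1 : w ∉ r1.support := by
    have := hq1p.reverse.support_nodup
    rw [hr1sup] at this
    exact (List.nodup_cons.mp this).1
  have hwr2 : w ∉ r2.support := by
    have := hq2p.support_nodup
    rw [hr2sup] at this
    exact (List.nodup_cons.mp this).1
  have hr1T : ∀ z ∈ r1.support, z ∉ insert w T := by
    intro z hz
    have hz0 : z ∈ q1.reverse.support := by
      rw [hr1sup]; exact List.mem_cons_of_mem _ hz
    rw [SimpleGraph.Walk.support_reverse, List.mem_reverse] at hz0
    have hz' : z ∈ p.support := SimpleGraph.Walk.support_takeUntil_subset p hw hz0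
    intro hmem
    rcases hmem with rfl | hmem
    · exact hwr1 hz
    · exact hT z hz' hmem
  have hr2T : ∀ z ∈ r2.support, z ∉ insert w T := by
    intro z hz
    have hz' : z ∈ p.support := by
      apply SimpleGraph.Walk.support_dropUntil_subset p hw
      rw [hr2sup]
      exact List.mem_cons_of_mem _ hz
    intro hmem
    rcases hmem with rfl | hmem
    · exact hwr2 hz
    · exact hT z hz' hmem
  exact ⟨x, y, hadjx, hadjy, ⟨r1.reverse, by simpa using hr1T⟩, ⟨r2, hr2T⟩⟩

theorem stmt4 [Finite V] (G : SimpleGraph V) (hbip : G.Colorable 2) (k : ℕ)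
    (hk : G.vertexConnectivity = k) (hk1 : 1 ≤ k) (hcard : 3 ≤ Nat.card V)
    (u v : V) (huv : G.IsBisimplicialEdge u v)
    (S : Set V) (hS : S ⊆ ({u, v} : Set V)ᶜ)
    (hcut : ¬ (G.induce (({u, v} : Set V) ∪ S)ᶜ).Preconnected) :
    k - 1 ≤ S.ncard := by
  classical
  by_contra hlt
  push_neg at hlt
  obtain ⟨T, hT⟩ : ∃ T : Set V, T = ({u, v} : Set V) ∪ S := ⟨_, rfl⟩
  rw [← hT] at hcut
  have huvne : u ≠ v := huv.1.ne
  have huS : u ∉ S := fun h => (hS h) (by simp)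
  have hvS : v ∉ S := fun h => (hS h) (by simp)
  have hSfin : S.Finite := Set.toFinite S
  -- vertex connectivity facts
  have hex : ∃ W : Set V, G.IsVertexCutSet W := ⟨T, hcut⟩
  have hvc : G.vertexConnectivity = sInf {n | ∃ W : Set V, W.ncard = n ∧ G.IsVertexCutSet W} := by
    unfold SimpleGraph.vertexConnectivity
    rw [if_pos hex]
  have hkInf : sInf {n | ∃ W : Set V, W.ncard = n ∧ G.IsVertexCutSet W} = k := by
    rw [← hvc]; exact hk
  have hmin : ∀ W : Set V, G.IsVertexCutSet W → k ≤ W.ncard := by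
    intro W hW
    rw [← hkInf]
    exact Nat.sInf_le ⟨W, rfl, hW⟩
  -- insert u S and insert v S are not cuts
  have hcard_insert : ∀ w : V, w ∉ S → (insert w S).ncard < k := by
    intro w hw
    rw [Set.ncard_insert_of_notMem hw hSfin]
    omega
  have hconn_u : (G.induce ((insert u S : Set V)ᶜ)).Preconnected := by
    by_contra h
    exact absurd (hmin _ h) (by have := hcard_insert u huS; omega)
  have hconn_v : (G.induce ((insert v S : Set V)ᶜ)).Preconnected := by
    by_contra h
    exact absurd (hmin _ h) (by have := hcard_insert v hvS; omega)
  -- get non-reachable pair in induce Tᶜ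
  rw [SimpleGraph.Preconnected] at hcut
  push_neg at hcut
  obtain ⟨⟨a, haC⟩, ⟨b, hbC⟩, hab⟩ := hcut
  have haT : a ∉ T := haC
  have hbT : b ∉ T := hbC
  have hnav : ¬ Avoid G T a b := fun h => hab (reachable_of_avoid haC hbC h)
  have haU : a ∉ ({u, v} : Set V) := fun h => haT (by rw [hT]; exact Or.inl h)
  have hbU : b ∉ ({u, v} : Set V) := fun h => hbT (by rw [hT]; exact Or.inl h)
  have hau : a ≠ u := fun h => haU (by simp [h])
  have hav : a ≠ v := fun h => haU (by simp [h])
  have hbu : b ≠ u := fun h => hbU (by simp [h])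
  have hbv : b ≠ v := fun h => hbU (by simp [h])
  have haS : a ∉ S := fun h => haT (by rw [hT]; exact Or.inr h)
  have hbS : b ∉ S := fun h => hbT (by rw [hT]; exact Or.inr h)
  -- T as inserts
  have hTu : T = insert v (insert u S) := by
    ext z; simp [hT, Set.mem_insert_iff]; tauto
  have hTv : T = insert u (insert v S) := by
    ext z; simp [hT, Set.mem_insert_iff]; tauto
  -- From connectivity of G - (S ∪ {u}) : get neighbor y of v with Avoid G T y b  (or direct avoid)
  have key : ∀ (w w' : V), w ∉ S → T = insert w' (insert w S) →
      (G.induce ((insert w S : Set V)ᶜ)).Preconnected →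
      Avoid G T a b ∨
      ∃ x y, G.Adj w' x ∧ G.Adj w' y ∧ Avoid G T a x ∧ Avoid G T y b := by
    intro w w' hwS hTeq hconn
    have haw : a ∈ ((insert w S : Set V)ᶜ) := by
      intro h; apply haT; rw [hTeq]; exact Set.mem_insert_iff.mpr (Or.inr h)
    have hbw : b ∈ ((insert w S : Set V)ᶜ) := by
      intro h; apply hbT; rw [hTeq]; exact Set.mem_insert_iff.mpr (Or.inr h)
    have hreach := hconn ⟨a, haw⟩ ⟨b, hbw⟩
    obtain ⟨p0, hp0⟩ := avoid_of_reachable hreach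
    -- take a path
    have hpb : ∀ z ∈ p0.bypass.support, z ∉ (insert w S : Set V) :=
      fun z hz => hp0 z (p0.support_bypass_subset hz)
    by_cases hwmem : w' ∈ p0.bypass.support
    · right
      have haw' : a ≠ w' := by
        intro h; apply haT; rw [hTeq, h]; exact Set.mem_insert _ _
      have hbw' : b ≠ w' := by
        intro h; apply hbT; rw [hTeq, h]; exact Set.mem_insert _ _
      obtain ⟨x, y, hx, hy, hax, hyb⟩ :=
        extract p0.bypass p0.bypass_isPath hpb hwmem haw' hbw'
      rw [← hTeq] at hax hyb
      exact ⟨x, y, hx, hy, hax, hyb⟩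
    · left
      refine ⟨p0.bypass, ?_⟩
      intro z hz
      rw [hTeq]
      intro hmem
      rcases hmem with rfl | hmem
      · exact hwmem hz
      · exact hpb z hz hmem
  rcases key u v huS hTu hconn_u with h | ⟨_, y, _, hvy, _, hyb⟩
  · exact hnav h
  rcases key v u hvS hTv hconn_v with h | ⟨x, _, hux, _, hax, _⟩
  · exact hnav h
  -- now combine: Adj u x, Adj v y, Avoid a x, Avoid y b
  by_cases hxy : x = y
  · subst hxy
    exact hnav (avoid_trans hax hyb)
  · have hadj : G.Adj x y := huv.2 x y hux hvy hxy
    have hxT : x ∉ T := by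
      obtain ⟨p, hp⟩ := hax; exact hp x (SimpleGraph.Walk.end_mem_support p)
    have hyT : y ∉ T := by
      obtain ⟨p, hp⟩ := hyb; exact hp y (SimpleGraph.Walk.start_mem_support p)
    have hxy' : Avoid G T x y := ⟨.cons hadj .nil, by
      intro z hz; simp at hz; rcases hz with rfl | rfl; exacts [hxT, hyT]⟩
    exact hnav (avoid_trans (avoid_trans hax hxy') hyb)
end

section
/- Let G be a bipartite graph with κ(G) = k ≥ 1 and at least three vertices, let uv be a bisimplicial edge, and let S be a vertex cut of G ⊖ uv with |S| = k − 1. Then N_G(u)\{v} = S or N_G(v)\{u} = S. -/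
open SimpleGraph

variable {V : Type*}

lemma vc_le_of_cut [Finite V] (G : SimpleGraph V) {S : Set V} (h : G.IsVertexCutSet S) :
    G.vertexConnectivity ≤ S.ncard := by
  classical
  unfold SimpleGraph.vertexConnectivity
  rw [if_pos ⟨S, h⟩]
  exact Nat.sInf_le ⟨S, rfl, h⟩

lemma cut_of_nonadj (G : SimpleGraph V) {u w : V} (hne : u ≠ w) (hnadj : ¬ G.Adj u w) :
    G.IsVertexCutSet (G.neighborSet u) := by
  intro h
  have hu : u ∈ (G.neighborSet u)ᶜ := by simp
  have hw : w ∈ (G.neighborSet u)ᶜ := hnadj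
  obtain ⟨p⟩ := h ⟨u, hu⟩ ⟨w, hw⟩
  cases p with
  | nil => exact hne rfl
  | cons h' q =>
    rename_i b
    exact b.2 h'

theorem stmt5 [Finite V] (G : SimpleGraph V) (hbip : G.Colorable 2) (k : ℕ)
    (hk : G.vertexConnectivity = k) (hk1 : 1 ≤ k) (hcard : 3 ≤ Nat.card V)
    (u v : V) (huv : G.IsBisimplicialEdge u v)
    (S : Set V) (hS : S ⊆ ({u, v} : Set V)ᶜ)
    (hcut : ¬ (G.induce (({u, v} : Set V) ∪ S)ᶜ).Preconnected)
    (hScard : S.ncard = k - 1) :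
    G.neighborSet u \ {v} = S ∨ G.neighborSet v \ {u} = S := by
  classical
  obtain ⟨hadj, hbis⟩ := huv
  have huS : u ∉ S := fun h => hS h (Or.inl rfl)
  have hvS : v ∉ S := fun h => hS h (Or.inr rfl)
  have hWmem : ∀ z : V, z ∈ (({u, v} : Set V) ∪ S)ᶜ ↔ (z ≠ u ∧ z ≠ v ∧ z ∉ S) := by
    intro z
    simp [Set.mem_compl_iff, Set.mem_union, Set.mem_insert_iff, not_or, and_assoc]
  have degcase : ∀ (a b : V), G.Adj a b → (G.neighborSet a \ {b}) ⊆ S →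
      (∃ w, w ≠ a ∧ ¬ G.Adj a w) → G.neighborSet a \ {b} = S := by
    rintro a b hab hsub ⟨w, hwne, hwn⟩
    have hc := cut_of_nonadj G (Ne.symm hwne) hwn
    have hle : k ≤ (G.neighborSet a).ncard := by
      have := vc_le_of_cut G hc
      omega
    have hbmem : b ∈ G.neighborSet a := hab
    have hsum : (G.neighborSet a \ {b}).ncard + 1 = (G.neighborSet a).ncard :=
      Set.ncard_diff_singleton_add_one hbmem (Set.toFinite _)
    refine Set.eq_of_subset_of_ncard_le hsub ?_ (Set.toFinite _)
    omega
  by_cases hu' : ∃ z, z ∈ (({u, v} : Set V) ∪ S)ᶜ ∧ G.Adj u z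
  · by_cases hv' : ∃ z, z ∈ (({u, v} : Set V) ∪ S)ᶜ ∧ G.Adj v z
    · -- impossible: S itself would be a vertex cut of size k - 1 < k
      exfalso
      obtain ⟨x, hxW, hux⟩ := hu'
      obtain ⟨y, hyW, hvy⟩ := hv'
      have hB : ∀ z (hz : z ∈ (({u, v} : Set V) ∪ S)ᶜ), G.Adj u z ∨ G.Adj v z →
          (G.induce (({u, v} : Set V) ∪ S)ᶜ).Reachable ⟨z, hz⟩ ⟨x, hxW⟩ := by
        intro z hz hzadj
        by_cases hzx : z = x
        · subst hzx; rfl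
        by_cases hvz : G.Adj v z
        · have h1 : G.Adj x z := hbis x z hux hvz (fun h => hzx h.symm)
          have h2 : (G.induce (({u, v} : Set V) ∪ S)ᶜ).Adj ⟨z, hz⟩ ⟨x, hxW⟩ := h1.symm
          exact h2.reachable
        · have hzu : G.Adj u z := hzadj.resolve_right hvz
          have hzy : z ≠ y := fun h => hvz (h ▸ hvy)
          have h1 : G.Adj z y := hbis z y hzu hvy hzy
          have e1 : (G.induce (({u, v} : Set V) ∪ S)ᶜ).Adj ⟨z, hz⟩ ⟨y, hyW⟩ := h1
          by_cases hyx : y = x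
          · subst hyx; exact e1.reachable
          · have h2 : G.Adj x y := hbis x y hux hvy (fun h => hyx h.symm)
            have e2 : (G.induce (({u, v} : Set V) ∪ S)ᶜ).Adj ⟨y, hyW⟩ ⟨x, hxW⟩ := h2.symm
            exact e1.reachable.trans e2.reachable
      have hWsub : (({u, v} : Set V) ∪ S)ᶜ ⊆ Sᶜ := Set.compl_subset_compl.2 Set.subset_union_right
      have huSc : u ∈ Sᶜ := huS
      have key : ∀ (a t : ↥(Sᶜ)) (p : (G.induce Sᶜ).Walk a t), (t : V) = u →
          ∀ (ha : a.1 ∈ (({u, v} : Set V) ∪ S)ᶜ),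
          (G.induce (({u, v} : Set V) ∪ S)ᶜ).Reachable ⟨a.1, ha⟩ ⟨x, hxW⟩ := by
        intro a t p
        induction p with
        | nil =>
          intro ht ha
          rw [ht] at ha
          exact absurd rfl ((hWmem u).1 ha).1
        | cons h' q ih =>
          rename_i a' b' _
          intro ht ha
          by_cases hbW : (b' : V) ∈ (({u, v} : Set V) ∪ S)ᶜ
          · have hadj' : (G.induce (({u, v} : Set V) ∪ S)ᶜ).Adj ⟨a'.1, ha⟩ ⟨b'.1, hbW⟩ := h'
            exact hadj'.reachable.trans (ih ht hbW)
          · have hbuv : (b' : V) = u ∨ (b' : V) = v := by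
              have hbS : (b' : V) ∉ S := b'.2
              have hnw := (hWmem b').not.1 hbW
              push_neg at hnw
              by_cases h1 : (b' : V) = u
              · exact Or.inl h1
              · by_cases h2 : (b' : V) = v
                · exact Or.inr h2
                · exact absurd (hnw h1 h2) hbS
            have hadjG : G.Adj (a' : V) (b' : V) := h'
            refine hB a'.1 ha ?_
            rcases hbuv with h1 | h1
            · exact Or.inl (h1 ▸ hadjG.symm)
            · exact Or.inr (h1 ▸ hadjG.symm)
      simp only [SimpleGraph.Preconnected, not_forall] at hcut
      obtain ⟨a, b, hab⟩ := hcut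
      obtain ⟨d, hd⟩ : ∃ d : ↥((({u, v} : Set V) ∪ S)ᶜ),
          ¬ (G.induce (({u, v} : Set V) ∪ S)ᶜ).Reachable d ⟨x, hxW⟩ := by
        by_cases h : (G.induce (({u, v} : Set V) ∪ S)ᶜ).Reachable a ⟨x, hxW⟩
        · exact ⟨b, fun hb => hab (h.trans hb.symm)⟩
        · exact ⟨a, h⟩
      have hScut : G.IsVertexCutSet S := by
        intro hpre
        obtain ⟨p⟩ := hpre ⟨d.1, hWsub d.2⟩ ⟨u, huSc⟩
        exact hd (key ⟨d.1, hWsub d.2⟩ ⟨u, huSc⟩ p rfl d.2)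
      have := vc_le_of_cut G hScut
      omega
    · -- N(v) \ {u} = S
      right
      refine degcase v u hadj.symm ?_ ?_
      · rintro z ⟨hz1, hz2⟩
        by_contra hzS
        exact hv' ⟨z, (hWmem z).2 ⟨fun h => hz2 h, G.ne_of_adj hz1 |>.symm, hzS⟩, hz1⟩
      · simp only [SimpleGraph.Preconnected, not_forall] at hcut
        obtain ⟨a, b, hab⟩ := hcut
        refine ⟨a.1, ((hWmem a.1).1 a.2).2.1, fun h => ?_⟩
        exact hv' ⟨a.1, a.2, h⟩
  · -- N(u) \ {v} = S
    left
    refine degcase u v hadj ?_ ?_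
    · rintro z ⟨hz1, hz2⟩
      by_contra hzS
      exact hu' ⟨z, (hWmem z).2 ⟨G.ne_of_adj hz1 |>.symm, fun h => hz2 h, hzS⟩, hz1⟩
    · simp only [SimpleGraph.Preconnected, not_forall] at hcut
      obtain ⟨a, b, hab⟩ := hcut
      refine ⟨a.1, ((hWmem a.1).1 a.2).1, fun h => ?_⟩
      exact hu' ⟨a.1, a.2, h⟩
end

section
/- Let G be a bipartite graph with κ(G) = k ≥ 1 and at least three vertices, uv a bisimplicial edge, and S a vertex cut of G ⊖ uv with |S| = k − 1 such that N_G(u)\{v} = S. Then (N_G(v)\{u}) ∩ S = ∅, and every connected component of (G ⊖ uv) − S contains at least one vertex of N_G(v)\{u}. -/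
open SimpleGraph

variable {V : Type*}

theorem stmt6 [Finite V] (G : SimpleGraph V) (hbip : G.Colorable 2) (k : ℕ)
    (hk : G.vertexConnectivity = k) (hk1 : 1 ≤ k) (hcard : 3 ≤ Nat.card V)
    (u v : V) (huv : G.IsBisimplicialEdge u v)
    (S : Set V) (hS : S ⊆ ({u, v} : Set V)ᶜ)
    (hcut : ¬ (G.induce (({u, v} : Set V) ∪ S)ᶜ).Preconnected)
    (hScard : S.ncard = k - 1) (hU : G.neighborSet u \ {v} = S) :
    (G.neighborSet v \ {u}) ∩ S = ∅ ∧
    ∀ c : (G.induce (({u, v} : Set V) ∪ S)ᶜ).ConnectedComponent,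
      ∃ x, ∃ hx : x ∈ (({u, v} : Set V) ∪ S)ᶜ,
        x ∈ G.neighborSet v \ {u} ∧
          (⟨x, hx⟩ : ((({u, v} : Set V) ∪ S)ᶜ : Set V)) ∈ c.supp := by
  obtain ⟨hadj, hbis⟩ := huv
  have hvS : v ∉ S := fun h => (hS h) (by simp)
  obtain ⟨C⟩ := hbip
  have notri : ∀ x, G.Adj u x → G.Adj v x → False := by
    intro x hux hvx
    have h1 : C u ≠ C v := C.valid hadj
    have h2 : C u ≠ C x := C.valid hux
    have h3 : C v ≠ C x := C.valid hvx
    have e1 : (C u).val < 2 := (C u).isLt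
    have e2 : (C v).val < 2 := (C v).isLt
    have e3 : (C x).val < 2 := (C x).isLt
    have n1 : (C u).val ≠ (C v).val := fun h => h1 (Fin.ext h)
    have n2 : (C u).val ≠ (C x).val := fun h => h2 (Fin.ext h)
    have n3 : (C v).val ≠ (C x).val := fun h => h3 (Fin.ext h)
    omega
  have part1 : (G.neighborSet v \ {u}) ∩ S = ∅ := by
    ext x
    simp only [Set.mem_inter_iff, Set.mem_diff, mem_neighborSet, Set.mem_singleton_iff,
      Set.mem_empty_iff_false, iff_false, not_and]
    intro h hxS
    rw [← hU] at hxS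
    exact notri x hxS.1 h.1
  refine ⟨part1, ?_⟩
  intro c
  by_contra hcon
  push_neg at hcon
  have key : ∀ {a b : (Sᶜ : Set V)} (p : (G.induce Sᶜ).Walk a b),
      (∃ h : (a : V) ∈ (({u, v} : Set V) ∪ S)ᶜ, (G.induce (({u, v} : Set V) ∪ S)ᶜ).connectedComponentMk ⟨a, h⟩ = c) →
      (∃ h : (b : V) ∈ (({u, v} : Set V) ∪ S)ᶜ, (G.induce (({u, v} : Set V) ∪ S)ᶜ).connectedComponentMk ⟨b, h⟩ = c) := by
    intro a b p
    induction p with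
    | nil => exact id
    | @cons x y z hxy p ih =>
      rintro ⟨hx, hxc⟩
      apply ih
      have hyS : (y : V) ∉ S := y.2
      have hadjxy : G.Adj (x : V) (y : V) := hxy
      have hxuv : (x : V) ∉ ({u, v} : Set V) := fun h => hx (Or.inl h)
      by_cases hyu : (y : V) = u
      · exfalso
        have hxu : G.Adj u (x : V) := by rw [← hyu]; exact hadjxy.symm
        have hmem : (x : V) ∈ G.neighborSet u \ {v} :=
          ⟨hxu, fun h => hxuv (by simp at h ⊢; exact Or.inr h)⟩
        rw [hU] at hmem
        exact hx (Or.inr hmem)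
      · by_cases hyv : (y : V) = v
        · exfalso
          have hxv : G.Adj v (x : V) := by rw [← hyv]; exact hadjxy.symm
          have hxmem : (x : V) ∈ G.neighborSet v \ {u} :=
            ⟨hxv, fun h => hxuv (by simp at h ⊢; exact Or.inl h)⟩
          exact hcon (x : V) hx hxmem (by rwa [ConnectedComponent.mem_supp_iff])
        · have hy : (y : V) ∈ (({u, v} : Set V) ∪ S)ᶜ := by
            intro h
            rcases h with h | h
            · rcases h with h | h
              · exact hyu h
              · exact hyv h
            · exact hyS h
          refine ⟨hy, ?_⟩
          rw [← hxc]
          have hadj' : (G.induce (({u, v} : Set V) ∪ S)ᶜ).Adj ⟨(y : V), hy⟩ ⟨(x : V), hx⟩ := hadjxy.symm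
          exact ConnectedComponent.sound hadj'.reachable
  obtain ⟨w, hwc⟩ := c.exists_rep
  have hwS : (w : V) ∈ (Sᶜ : Set V) := fun h => w.2 (Or.inr h)
  have hcutS : G.IsVertexCutSet S := by
    intro hpre
    obtain ⟨p⟩ := hpre ⟨(w : V), hwS⟩ ⟨v, hvS⟩
    obtain ⟨hv', _⟩ := key p ⟨w.2, by rw [Subtype.coe_eta]; exact hwc⟩
    exact hv' (Or.inl (by simp))
  have hle : G.vertexConnectivity ≤ k - 1 := by
    rw [SimpleGraph.vertexConnectivity, if_pos ⟨S, hcutS⟩]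
    exact Nat.sInf_le ⟨S, hScard, hcutS⟩
  rw [hk] at hle
  omega
end

section
/- Let G be a chordal bipartite graph with κ(G) = k ≥ 1, and let uv be a bisimplicial edge of G. Then κ(G ⊖ uv) ≥ k − 1. -/
open SimpleGraph

variable {V : Type*}

namespace SimpleGraph

def RW (G : SimpleGraph V) (s : Set V) (a b : V) : Prop :=
  ∃ w : G.Walk a b, ∀ z ∈ w.support, z ∈ s

lemma RW.refl' {G : SimpleGraph V} {s : Set V} {a : V} (ha : a ∈ s) : G.RW s a a :=
  ⟨Walk.nil, by simp [ha]⟩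

lemma RW.trans' {G : SimpleGraph V} {s : Set V} {a b c : V}
    (h1 : G.RW s a b) (h2 : G.RW s b c) : G.RW s a c := by
  obtain ⟨w1, hw1⟩ := h1; obtain ⟨w2, hw2⟩ := h2
  exact ⟨w1.append w2, fun z hz =>
    ((Walk.mem_support_append_iff _ _).1 hz).elim (hw1 z) (hw2 z)⟩

lemma RW.adj' {G : SimpleGraph V} {s : Set V} {a b : V}
    (h : G.Adj a b) (ha : a ∈ s) (hb : b ∈ s) : G.RW s a b :=
  ⟨Walk.cons h Walk.nil, by simp [ha, hb]⟩

lemma reachable_induce_to_RW {G : SimpleGraph V} {s : Set V} {x y : ↥s}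
    (h : (G.induce s).Reachable x y) : G.RW s x.1 y.1 := by
  obtain ⟨w⟩ := h
  induction w with
  | nil => exact RW.refl' (Subtype.mem _)
  | cons h p ih =>
    exact RW.trans' (RW.adj' h (Subtype.mem _) (Subtype.mem _)) ih

lemma RW_to_induce_walk {G : SimpleGraph V} {s : Set V} :
    ∀ {a b : V} (w : G.Walk a b), (∀ z ∈ w.support, z ∈ s) → ∀ (ha : a ∈ s) (hb : b ∈ s),
    ∃ w' : (G.induce s).Walk ⟨a, ha⟩ ⟨b, hb⟩, ∀ z ∈ w'.support, z.1 ∈ w.support := by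
  intro a b w
  induction w with
  | nil =>
    intro h ha hb
    exact ⟨Walk.nil, by simp⟩
  | @cons a c b hadj p ih =>
    intro h ha hb
    have hc : c ∈ s := h c (by simp)
    obtain ⟨w', hw'⟩ := ih (fun z hz => h z (by simp [hz])) hc hb
    refine ⟨Walk.cons (show (G.induce s).Adj ⟨a, ha⟩ ⟨c, hc⟩ from hadj) w', ?_⟩
    intro z hz
    rw [Walk.support_cons, List.mem_cons] at hz
    rcases hz with rfl | hz
    · simp
    · simp [hw' z hz]

lemma key_walk {G : SimpleGraph V} {s : Set V} {u : V} (hu : u ∉ s) :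
    ∀ {a b : V} (w : G.Walk a b), (∀ z ∈ w.support, z ∈ s ∪ {u}) → b ∈ s →
    ((a = u → ∃ y ∈ s, G.Adj u y ∧ G.RW s y b) ∧
     (a ∈ s → G.RW s a b ∨
       ∃ x ∈ s, ∃ y ∈ s, G.Adj u x ∧ G.Adj u y ∧ G.RW s a x ∧ G.RW s y b)) := by
  intro a b w
  induction w with
  | nil =>
    intro hsup hb
    constructor
    · rintro rfl; exact absurd hb hu
    · intro ha; exact Or.inl (RW.refl' ha)
  | @cons a c b hadj p ih =>
    intro hsup hb
    have hc : c ∈ s ∪ {u} := hsup c (by simp)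
    have IH := ih (fun z hz => hsup z (by simp [hz])) hb
    constructor
    · rintro rfl
      rcases hc with hc | hc
      · rcases IH.2 hc with h | ⟨x, hx, y, hy, hux, huy, hcx, hyb⟩
        · exact ⟨c, hc, hadj, h⟩
        · exact ⟨y, hy, huy, hyb⟩
      · exact absurd hadj (by simp_all)
    · intro ha
      rcases hc with hc | hc
      · rcases IH.2 hc with h | ⟨x, hx, y, hy, hux, huy, hcx, hyb⟩
        · exact Or.inl (RW.trans' (RW.adj' hadj ha hc) h)
        · exact Or.inr ⟨x, hx, y, hy, hux, huy,
            RW.trans' (RW.adj' hadj ha hc) hcx, hyb⟩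
      · simp only [Set.mem_singleton_iff] at hc
        subst hc
        obtain ⟨y, hy, huy, hyb⟩ := IH.1 rfl
        exact Or.inr ⟨a, ha, y, hy, hadj.symm, huy, RW.refl' ha, hyb⟩

lemma not_reachable_of_two {W : Type*} {G' : SimpleGraph W} {x y : W}
    (h : ∀ z : W, z = x ∨ z = y) (hxy : x ≠ y) (hna : ¬ G'.Adj x y) :
    ¬ G'.Reachable x y := by
  rintro ⟨w⟩
  cases w with
  | nil => exact hxy rfl
  | @cons _ c _ hadj p =>
    rcases h c with rfl | rfl
    · exact G'.irrefl hadj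
    · exact hna hadj

lemma cut_transfer {G : SimpleGraph V} {u v : V} (huv : G.IsBisimplicialEdge u v)
    {T : Set ↥(({u, v} : Set V)ᶜ)}
    (hT : (G.induce (({u, v} : Set V)ᶜ)).IsVertexCutSet T) :
    G.IsVertexCutSet (Subtype.val '' T ∪ {u}) ∨
      G.IsVertexCutSet (Subtype.val '' T ∪ {v}) := by
  classical
  set T' : Set V := Subtype.val '' T with hT'def
  set s : Set V := (T' ∪ {u, v})ᶜ with hsdef
  unfold SimpleGraph.IsVertexCutSet SimpleGraph.Preconnected at hT
  push_neg at hT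
  obtain ⟨x, y, hxy⟩ := hT
  have hauv : (x.1 : V) ∈ (({u, v} : Set V)ᶜ) := x.1.2
  have hbuv : (y.1 : V) ∈ (({u, v} : Set V)ᶜ) := y.1.2
  have haT' : (x.1 : V) ∉ T' := by
    rintro ⟨t, htT, hta⟩
    exact x.2 (by rwa [Subtype.val_injective hta] at htT)
  have hbT' : (y.1 : V) ∉ T' := by
    rintro ⟨t, htT, hta⟩
    exact y.2 (by rwa [Subtype.val_injective hta] at htT)
  have ha : (x.1 : V) ∈ s := by
    rw [hsdef]; intro h; rcases h with h | h
    exacts [haT' h, hauv h]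
  have hb : (y.1 : V) ∈ s := by
    rw [hsdef]; intro h; rcases h with h | h
    exacts [hbT' h, hbuv h]
  have hnR : ¬ G.RW s (x.1 : V) (y.1 : V) := by
    rintro ⟨w, hw⟩
    have hsub1 : ∀ z ∈ w.support, z ∈ (({u, v} : Set V)ᶜ) := by
      intro z hz h; exact hw z hz (Or.inr h)
    obtain ⟨w', hw'⟩ := RW_to_induce_walk w hsub1 hauv hbuv
    have hsub2 : ∀ z ∈ w'.support, z ∈ Tᶜ := by
      intro z hz htz
      exact hw _ (hw' z hz) (Or.inl ⟨z, htz, rfl⟩)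
    obtain ⟨w'', -⟩ := RW_to_induce_walk w' hsub2 x.2 y.2
    exact hxy ⟨w''⟩
  by_contra hcon
  push_neg at hcon
  obtain ⟨h1, h2⟩ := hcon
  unfold SimpleGraph.IsVertexCutSet at h1 h2
  rw [not_not] at h1 h2
  -- walk avoiding T' ∪ {u}, may pass through v
  have hav1 : (x.1 : V) ∈ (T' ∪ {u} : Set V)ᶜ := by
    intro h; rcases h with h | h
    exacts [haT' h, hauv (by simp only [Set.mem_singleton_iff] at h; simp [h])]
  have hbv1 : (y.1 : V) ∈ (T' ∪ {u} : Set V)ᶜ := by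
    intro h; rcases h with h | h
    exacts [hbT' h, hbuv (by simp only [Set.mem_singleton_iff] at h; simp [h])]
  have hav2 : (x.1 : V) ∈ (T' ∪ {v} : Set V)ᶜ := by
    intro h; rcases h with h | h
    exacts [haT' h, hauv (by simp only [Set.mem_singleton_iff] at h; simp [h])]
  have hbv2 : (y.1 : V) ∈ (T' ∪ {v} : Set V)ᶜ := by
    intro h; rcases h with h | h
    exacts [hbT' h, hbuv (by simp only [Set.mem_singleton_iff] at h; simp [h])]
  obtain ⟨w1, hw1⟩ := reachable_induce_to_RW (h1 ⟨_, hav1⟩ ⟨_, hbv1⟩)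
  obtain ⟨w2, hw2⟩ := reachable_induce_to_RW (h2 ⟨_, hav2⟩ ⟨_, hbv2⟩)
  have hvs : v ∉ s := by rw [hsdef]; intro h; exact h (Or.inr (by simp))
  have hus : u ∉ s := by rw [hsdef]; intro h; exact h (Or.inr (by simp))
  have hw1' : ∀ z ∈ w1.support, z ∈ s ∪ {v} := by
    intro z hz
    have h := hw1 z hz
    by_cases hzv : z = v
    · exact Or.inr (by simp [hzv])
    · refine Or.inl ?_
      rw [hsdef]; intro hmem
      rcases hmem with hmem | hmem
      · exact h (Or.inl hmem)
      · rcases hmem with hmem | hmem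
        · exact h (Or.inr (by simp [hmem]))
        · exact hzv hmem
  have hw2' : ∀ z ∈ w2.support, z ∈ s ∪ {u} := by
    intro z hz
    have h := hw2 z hz
    by_cases hzu : z = u
    · exact Or.inr (by simp [hzu])
    · refine Or.inl ?_
      rw [hsdef]; intro hmem
      rcases hmem with hmem | hmem
      · exact h (Or.inl hmem)
      · rcases hmem with hmem | hmem
        · exact hzu hmem
        · exact h (Or.inr (by simp [hmem]))
  rcases (key_walk hvs w1 hw1' hb).2 ha with h | ⟨x2, hx2, y2, hy2, hvx2, hvy2, hax2, hy2b⟩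
  · exact hnR h
  rcases (key_walk hus w2 hw2' hb).2 ha with h | ⟨x1, hx1, y1, hy1, hux1, huy1, hax1, hy1b⟩
  · exact hnR h
  by_cases hxy12 : x1 = y2
  · subst hxy12
    exact hnR (RW.trans' hax1 hy2b)
  · have hadj := huv.2 x1 y2 hux1 hvy2 hxy12
    exact hnR (RW.trans' hax1 (RW.trans' (RW.adj' hadj hx1 hy2) hy2b))

end SimpleGraph


theorem stmt7 [Finite V] (G : SimpleGraph V) (hcb : G.ChordalBipartite) (k : ℕ)
    (hk : G.vertexConnectivity = k) (hk1 : 1 ≤ k) (u v : V)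
    (huv : G.IsBisimplicialEdge u v) :
    k - 1 ≤ (G.induce (({u, v} : Set V)ᶜ)).vertexConnectivity := by
  classical
  have huvne : u ≠ v := huv.1.ne
  by_cases hHcut : ∃ T : Set ↥(({u, v} : Set V)ᶜ),
      (G.induce (({u, v} : Set V)ᶜ)).IsVertexCutSet T
  · -- a minimum cut of H exists
    have hHvc : (G.induce (({u, v} : Set V)ᶜ)).vertexConnectivity ∈
        {n | ∃ T : Set ↥(({u, v} : Set V)ᶜ), T.ncard = n ∧
          (G.induce (({u, v} : Set V)ᶜ)).IsVertexCutSet T} := by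
      unfold SimpleGraph.vertexConnectivity
      rw [if_pos hHcut]
      obtain ⟨T, hT⟩ := hHcut
      exact Nat.sInf_mem ⟨T.ncard, T, rfl, hT⟩
    obtain ⟨T, hTcard, hTcut⟩ := hHvc
    have htrans := SimpleGraph.cut_transfer huv hTcut
    have hex : ∃ S : Set V, G.IsVertexCutSet S ∧ S.ncard ≤ T.ncard + 1 := by
      have hcalc : ∀ w : V, (Subtype.val '' T ∪ {w}).ncard ≤ T.ncard + 1 := by
        intro w
        calc (Subtype.val '' T ∪ {w}).ncard
            ≤ (Subtype.val '' T).ncard + ({w} : Set V).ncard := Set.ncard_union_le _ _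
          _ = T.ncard + 1 := by
              rw [Set.ncard_image_of_injective _ Subtype.val_injective,
                Set.ncard_singleton]
      rcases htrans with h | h
      · exact ⟨_, h, hcalc u⟩
      · exact ⟨_, h, hcalc v⟩
    obtain ⟨S, hScut, hScard⟩ := hex
    have hkle : k ≤ S.ncard := by
      rw [← hk]
      unfold SimpleGraph.vertexConnectivity
      rw [if_pos ⟨S, hScut⟩]
      exact Nat.sInf_le ⟨S, rfl, hScut⟩
    omega
  · -- H has no cut
    have hvcH : (G.induce (({u, v} : Set V)ᶜ)).vertexConnectivity =
        Nat.card ↥(({u, v} : Set V)ᶜ) - 1 := by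
      unfold SimpleGraph.vertexConnectivity
      rw [if_neg hHcut]
    have hcompl : (({u, v} : Set V)ᶜ).ncard = Nat.card V - 2 := by
      have h1 := Set.ncard_add_ncard_compl ({u, v} : Set V)
      rw [Set.ncard_pair huvne] at h1
      omega
    rw [hvcH, Nat.card_coe_set_eq, hcompl]
    by_cases hn : 3 ≤ Nat.card V
    · -- find a third vertex
      have hthird : ∃ w, w ∉ ({u, v} : Set V) := by
        by_contra hall
        push_neg at hall
        have hle : (Set.univ : Set V).ncard ≤ ({u, v} : Set V).ncard :=
          Set.ncard_le_ncard (fun z _ => hall z) (Set.toFinite _)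
        rw [Set.ncard_univ, Set.ncard_pair huvne] at hle
        omega
      obtain ⟨w, hw⟩ := hthird
      have hwu : w ≠ u ∧ w ≠ v := by
        constructor <;> (rintro rfl; exact hw (by simp))
      obtain ⟨c⟩ := hcb.1
      have hpick : ∃ p, (p = u ∨ p = v) ∧ ¬ G.Adj p w := by
        by_cases hcw : c w = c u
        · exact ⟨u, Or.inl rfl, fun h => (c.valid h) hcw.symm⟩
        · refine ⟨v, Or.inr rfl, fun h => (c.valid h) ?_⟩
          have hne := c.valid huv.1
          have : ∀ i j m : Fin 2, i ≠ j → m ≠ i → m = j := by decide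
          exact (this (c u) (c v) (c w) hne hcw).symm
      obtain ⟨p, hp, hpw⟩ := hpick
      have hpwne : p ≠ w := by
        rcases hp with rfl | rfl
        · exact fun h => hwu.1 h.symm
        · exact fun h => hwu.2 h.symm
      have hScut : G.IsVertexCutSet (({p, w} : Set V)ᶜ) := by
        unfold SimpleGraph.IsVertexCutSet SimpleGraph.Preconnected
        intro hpre
        have hx : p ∈ ((({p, w} : Set V)ᶜ)ᶜ) := by simp
        have hy : w ∈ ((({p, w} : Set V)ᶜ)ᶜ) := by simp
        refine SimpleGraph.not_reachable_of_two (x := (⟨p, hx⟩ : ↥((({p, w} : Set V)ᶜ)ᶜ)))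
          (y := ⟨w, hy⟩) ?_ ?_ ?_ (hpre _ _)
        · intro z
          have hz := z.2
          simp only [compl_compl, Set.mem_insert_iff, Set.mem_singleton_iff] at hz
          rcases hz with h | h
          · exact Or.inl (Subtype.ext h)
          · exact Or.inr (Subtype.ext h)
        · exact fun h => hpwne (congrArg Subtype.val h)
        · exact fun h => hpw h
      have hkle : k ≤ Nat.card V - 2 := by
        rw [← hk]
        unfold SimpleGraph.vertexConnectivity
        rw [if_pos ⟨_, hScut⟩]
        have hcard : (({p, w} : Set V)ᶜ).ncard = Nat.card V - 2 := by
          have h1 := Set.ncard_add_ncard_compl ({p, w} : Set V)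
          rw [Set.ncard_pair hpwne] at h1
          omega
        exact Nat.sInf_le ⟨_, hcard, hScut⟩
      omega
    · -- Nat.card V ≤ 2 : V = {u, v}
      have hall : ∀ z : V, z = u ∨ z = v := by
        by_contra hz
        push_neg at hz
        obtain ⟨z, hzu, hzv⟩ := hz
        have hle : ({z, u, v} : Set V).ncard ≤ (Set.univ : Set V).ncard :=
          Set.ncard_le_ncard (Set.subset_univ _) (Set.toFinite _)
        rw [Set.ncard_univ] at hle
        have h3 : ({z, u, v} : Set V).ncard = 3 := by
          rw [Set.ncard_insert_of_notMem (by simp [hzu, hzv]), Set.ncard_pair huvne]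
        omega
      have hnocut : ¬ ∃ S : Set V, G.IsVertexCutSet S := by
        rintro ⟨S, hS⟩
        apply hS
        intro x y
        rcases hall x.1 with hx | hx <;> rcases hall y.1 with hy | hy
        · rw [show x = y from Subtype.ext (hx.trans hy.symm)]
        · exact SimpleGraph.Adj.reachable (by show G.Adj x.1 y.1; rw [hx, hy]; exact huv.1)
        · exact SimpleGraph.Adj.reachable (by show G.Adj x.1 y.1; rw [hx, hy]; exact huv.1.symm)
        · rw [show x = y from Subtype.ext (hx.trans hy.symm)]
      have hkeq : G.vertexConnectivity = Nat.card V - 1 := by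
        unfold SimpleGraph.vertexConnectivity
        rw [if_neg hnocut]
      have hcard : Nat.card V ≤ 2 := by omega
      omega
end

section
/- For every even n ≥ 4, there exists a 2-connected chordal bipartite graph with n vertices and exactly (3/2)n − 2 edges, namely the 2 × (n/2) grid graph (the Cartesian product of P_2 and P_{n/2}). -/
open SimpleGraph

variable {V : Type*}

variable {V : Type*} {G : SimpleGraph V}

private lemma aux_start_edge {x z y w : V} (hadj : G.Adj x z) (q : G.Walk z y)
    (hp : (Walk.cons hadj q).IsPath) (h : s(x, w) ∈ (Walk.cons hadj q).edges) : w = z := by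
  rw [Walk.edges_cons, List.mem_cons] at h
  rcases h with h | h
  · rw [Sym2.eq_iff] at h
    rcases h with ⟨-, rfl⟩ | ⟨h1, rfl⟩
    · rfl
    · exact absurd h1 hadj.ne
  · exact absurd (q.fst_mem_support_of_mem_edges h) ((Walk.cons_isPath_iff hadj q).mp hp).2

private lemma aux_cycle_two_nbrs [DecidableEq V] {a v : V} {c : G.Walk a a} (hc : c.IsCycle)
    (hv : v ∈ c.support) :
    ∃ w₁ w₂, w₁ ≠ w₂ ∧ s(v, w₁) ∈ c.edges ∧ s(v, w₂) ∈ c.edges ∧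
      ∀ w, s(v, w) ∈ c.edges → w = w₁ ∨ w = w₂ := by
  have hmem : ∀ e, e ∈ (c.rotate v hv).edges ↔ e ∈ c.edges := fun e => (c.rotate_edges v hv).mem_iff
  have hc' : (c.rotate v hv).IsCycle := hc.rotate hv
  obtain ⟨z, hadj, q, hq⟩ : ∃ (z : V) (hadj : G.Adj v z) (q : G.Walk z v),
      c.rotate v hv = Walk.cons hadj q := by
    cases hcc : c.rotate v hv with
    | nil => rw [hcc] at hc'; exact absurd hc' (Walk.IsCycle.not_of_nil)
    | cons hadj q => exact ⟨_, hadj, q, rfl⟩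
  rw [hq] at hc' hmem
  obtain ⟨hqpath, hznot⟩ := (Walk.cons_isCycle_iff q hadj).mp hc'
  have hqrpath : q.reverse.IsPath := hqpath.reverse
  obtain ⟨w₂, hadj₂, q₂, hq₂⟩ : ∃ (w₂ : V) (hadj₂ : G.Adj v w₂) (q₂ : G.Walk w₂ z),
      q.reverse = Walk.cons hadj₂ q₂ := by
    cases hqq : q.reverse with
    | nil => exact absurd rfl hadj.ne
    | cons hadj₂ q₂ => exact ⟨_, hadj₂, q₂, rfl⟩
  have he₂q : s(v, w₂) ∈ q.edges := by
    have : s(v, w₂) ∈ q.reverse.edges := by rw [hq₂, Walk.edges_cons]; exact List.mem_cons_self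
    rwa [Walk.edges_reverse, List.mem_reverse] at this
  refine ⟨z, w₂, ?_, ?_, ?_, ?_⟩
  · rintro rfl
    exact hznot he₂q
  · rw [← hmem, Walk.edges_cons]; exact List.mem_cons_self
  · rw [← hmem, Walk.edges_cons]; exact List.mem_cons.mpr (Or.inr he₂q)
  · intro w hw
    rw [← hmem, Walk.edges_cons, List.mem_cons] at hw
    rcases hw with hw | hw
    · rw [Sym2.eq_iff] at hw
      rcases hw with ⟨-, rfl⟩ | ⟨h1, rfl⟩
      · exact Or.inl rfl
      · exact absurd h1 hadj.ne
    · right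
      rw [← List.mem_reverse, ← Walk.edges_reverse] at hw
      rw [hq₂] at hw hqrpath
      exact aux_start_edge hadj₂ q₂ hqrpath hw

private lemma aux_end_mem_tail {x y : V} (p : G.Walk x y) (hp : ¬ p.Nil) :
    y ∈ p.support.tail := by
  cases p with
  | nil => simp at hp
  | cons h q => simpa using q.end_mem_support

private lemma aux_support_closed {a : V} {c : G.Walk a a} {T : Set V}
    (hT : ∀ v ∈ T, ∀ w, s(v, w) ∈ c.edges → w ∈ T) :
    ∀ {x y : V} (p : G.Walk x y), (∀ e ∈ p.edges, e ∈ c.edges) → x ∈ T →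
      ∀ z ∈ p.support, z ∈ T := by
  intro x y p
  induction p with
  | nil => intro _ hx z hz; simp at hz; rwa [hz]
  | cons h q ih =>
    intro hsub hx z hz
    rw [Walk.support_cons, List.mem_cons] at hz
    rcases hz with rfl | hz
    · exact hx
    · refine ih (fun e he => hsub e ?_) (hT _ hx _ (hsub _ ?_)) z hz
      · rw [Walk.edges_cons]; exact List.mem_cons.mpr (Or.inr he)
      · rw [Walk.edges_cons]; exact List.mem_cons_self

private lemma aux_cycle_support_subset [DecidableEq V] {a u : V} {c : G.Walk a a}
    (hc : c.IsCycle) (hu : u ∈ c.support) {T : Set V} (huT : u ∈ T)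
    (hT : ∀ v ∈ T, ∀ w, s(v, w) ∈ c.edges → w ∈ T) :
    ∀ z ∈ c.support, z ∈ T := by
  intro z hz
  have hzt : z ∈ c.support.tail := by
    rcases List.mem_cons.mp (by rwa [← c.support_eq_cons] ) with rfl | h
    · exact aux_end_mem_tail c hc.not_nil
    · exact h
  have hz' : z ∈ (c.rotate u hu).support := by
    have := (c.support_rotate u hu).mem_iff (a := z)
    exact List.mem_of_mem_tail (this.mpr hzt)
  exact aux_support_closed hT (c.rotate u hu) (fun e he => (c.rotate_edges u hu).mem_iff.mp he)
    huT z hz'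

private lemma aux_two_of {P : V → Prop} {w₁ w₂ a b : V}
    (h : ∀ w, P w → w = w₁ ∨ w = w₂) (ha : P a) (hb : P b) (hab : a ≠ b) :
    ∀ w, P w → w = a ∨ w = b := by
  intro w hw
  rcases h a ha with rfl | rfl <;> rcases h b hb with rfl | rfl <;>
    rcases h w hw with rfl | rfl <;> tauto

private lemma grid_adj {k : ℕ} {x y : Fin 2 × Fin k} :
    ((pathGraph 2).boxProd (pathGraph k)).Adj x y ↔
      (x.1 ≠ y.1 ∧ x.2 = y.2) ∨
        ((x.2.val + 1 = y.2.val ∨ y.2.val + 1 = x.2.val) ∧ x.1 = y.1) := by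
  rw [boxProd_adj, pathGraph_two_eq_top, pathGraph_adj]
  simp [top_adj]

private lemma fin2_eq {r s t : Fin 2} (h1 : r ≠ t) (h2 : s ≠ t) : r = s := by
  fin_cases r <;> fin_cases s <;> fin_cases t <;> simp_all

private lemma grid_chord {k : ℕ} {a : Fin 2 × Fin k}
    (c : ((pathGraph 2).boxProd (pathGraph k)).Walk a a) (hc : c.IsCycle)
    (hlen : 6 ≤ c.length) :
    ((pathGraph 2).boxProd (pathGraph k)).CycleHasChord c := by
  -- maximum column
  have hFne : (c.support.toFinset.image (fun v : Fin 2 × Fin k => v.2.val)).Nonempty :=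
    ⟨a.2.val, Finset.mem_image.mpr ⟨a, List.mem_toFinset.mpr c.start_mem_support, rfl⟩⟩
  set M := (c.support.toFinset.image (fun v : Fin 2 × Fin k => v.2.val)).max' hFne with hM
  have hbound : ∀ v ∈ c.support, v.2.val ≤ M := by
    intro v hv
    exact Finset.le_max' _ v.2.val
      (Finset.mem_image.mpr ⟨v, List.mem_toFinset.mpr hv, rfl⟩)
  obtain ⟨u, hu_sup, huM⟩ : ∃ u, u ∈ c.support ∧ u.2.val = M := by
    obtain ⟨u, hu, huM⟩ := Finset.mem_image.mp (Finset.max'_mem _ hFne)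
    exact ⟨u, List.mem_toFinset.mp hu, huM⟩
  -- classification of cycle-neighbours of a max-column vertex
  have classify : ∀ p w : Fin 2 × Fin k, p.2.val = M → s(p, w) ∈ c.edges →
      (w.1 ≠ p.1 ∧ w.2 = p.2) ∨ (w.1 = p.1 ∧ w.2.val + 1 = p.2.val) := by
    intro p w hpM he
    have hadj := c.adj_of_mem_edges he
    have hw : w ∈ c.support := c.snd_mem_support_of_mem_edges he
    have hwM : w.2.val ≤ M := hbound w hw
    rcases grid_adj.mp hadj with ⟨h1, h2⟩ | ⟨h1, h2⟩
    · exact Or.inl ⟨h1.symm, h2.symm⟩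
    · refine Or.inr ⟨h2.symm, ?_⟩
      rcases h1 with h1 | h1
      · omega
      · exact h1
  have vuniq : ∀ p w w' : Fin 2 × Fin k, (w.1 ≠ p.1 ∧ w.2 = p.2) →
      (w'.1 ≠ p.1 ∧ w'.2 = p.2) → w = w' := by
    rintro p w w' ⟨h1, h2⟩ ⟨h3, h4⟩
    exact Prod.ext (fin2_eq h1 h3) (by rw [h2, h4])
  have huniqh : ∀ p w w' : Fin 2 × Fin k, (w.1 = p.1 ∧ w.2.val + 1 = p.2.val) →
      (w'.1 = p.1 ∧ w'.2.val + 1 = p.2.val) → w = w' := by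
    rintro p w w' ⟨h1, h2⟩ ⟨h3, h4⟩
    exact Prod.ext (by rw [h1, h3]) (Fin.ext (by omega))
  obtain ⟨w₁, w₂, hw12, he₁, he₂, huniq⟩ := aux_cycle_two_nbrs hc hu_sup
  have main : ∃ u' b₀ : Fin 2 × Fin k, (u'.1 ≠ u.1 ∧ u'.2 = u.2) ∧
      (b₀.1 = u.1 ∧ b₀.2.val + 1 = u.2.val) ∧ s(u, u') ∈ c.edges ∧ s(u, b₀) ∈ c.edges ∧
      ∀ w, s(u, w) ∈ c.edges → w = u' ∨ w = b₀ := by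
    rcases classify u w₁ huM he₁ with hv₁ | hh₁ <;> rcases classify u w₂ huM he₂ with hv₂ | hh₂
    · exact absurd (vuniq u w₁ w₂ hv₁ hv₂) hw12
    · exact ⟨w₁, w₂, hv₁, hh₂, he₁, he₂, huniq⟩
    · exact ⟨w₂, w₁, hv₂, hh₁, he₂, he₁, fun w hw => Or.symm (huniq w hw)⟩
    · exact absurd (huniqh u w₁ w₂ hh₁ hh₂) hw12
  obtain ⟨u', b₀, ⟨hu'1, hu'2⟩, ⟨hb₀1, hb₀2⟩, heu', heb₀, huuniq⟩ := main
  have hu'sup : u' ∈ c.support := c.snd_mem_support_of_mem_edges heu'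
  have hu'M : u'.2.val = M := by rw [hu'2]; exact huM
  have huvert : u.1 ≠ u'.1 ∧ u.2 = u'.2 := ⟨hu'1.symm, hu'2.symm⟩
  obtain ⟨x₁, x₂, hx12, hf₁, hf₂, hu'uniq⟩ := aux_cycle_two_nbrs hc hu'sup
  have main' : ∃ b₁ : Fin 2 × Fin k, (b₁.1 = u'.1 ∧ b₁.2.val + 1 = u'.2.val) ∧
      s(u', b₁) ∈ c.edges ∧ ∀ w, s(u', w) ∈ c.edges → w = u ∨ w = b₁ := by
    rcases classify u' x₁ hu'M hf₁ with hv₁ | hh₁ <;>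
      rcases classify u' x₂ hu'M hf₂ with hv₂ | hh₂
    · exact absurd (vuniq u' x₁ x₂ hv₁ hv₂) hx12
    · have hx₁ : x₁ = u := vuniq u' x₁ u hv₁ huvert
      exact ⟨x₂, hh₂, hf₂, fun w hw => by
        rcases hu'uniq w hw with rfl | rfl
        · exact Or.inl hx₁
        · exact Or.inr rfl⟩
    · have hx₂ : x₂ = u := vuniq u' x₂ u hv₂ huvert
      exact ⟨x₁, hh₁, hf₁, fun w hw => by
        rcases hu'uniq w hw with rfl | rfl
        · exact Or.inr rfl
        · exact Or.inl hx₂⟩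
    · exact absurd (huniqh u' x₁ x₂ hh₁ hh₂) hx12
  obtain ⟨b₁, ⟨hb₁1, hb₁2⟩, heb₁, hu'uniq'⟩ := main'
  have hb₀sup : b₀ ∈ c.support := c.snd_mem_support_of_mem_edges heb₀
  have hb₁sup : b₁ ∈ c.support := c.snd_mem_support_of_mem_edges heb₁
  have hb₀b₁2 : b₀.2 = b₁.2 := Fin.ext (by rw [hu'2] at hb₁2; omega)
  have hb₀b₁1 : b₀.1 ≠ b₁.1 := by rw [hb₀1, hb₁1]; exact hu'1.symm
  have hadjb : ((pathGraph 2).boxProd (pathGraph k)).Adj b₀ b₁ := grid_adj.mpr (Or.inl ⟨hb₀b₁1, hb₀b₁2⟩)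
  refine ⟨b₀, b₁, hb₀sup, hb₁sup, hadjb, ?_⟩
  intro hmem
  -- derive a contradiction : the cycle would be confined to 4 vertices
  have hub₁ : u ≠ b₁ := by
    intro h
    rw [← h, hu'2] at hb₁2
    omega
  have hu'b₀ : u' ≠ b₀ := by
    intro h
    rw [← h, hu'2] at hb₀2  -- hb₀2 : b₀.2.val + 1 = u.2.val ; with b₀ = u'
    omega
  obtain ⟨y₁, y₂, hy12, hg₁, hg₂, hb₀uniq⟩ := aux_cycle_two_nbrs hc hb₀sup
  have heb₀u : s(b₀, u) ∈ c.edges := by rwa [Sym2.eq_swap]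
  have hb₀nbrs : ∀ w, s(b₀, w) ∈ c.edges → w = u ∨ w = b₁ :=
    aux_two_of hb₀uniq heb₀u hmem hub₁
  obtain ⟨z₁, z₂, hz12, hh₁', hh₂', hb₁uniq⟩ := aux_cycle_two_nbrs hc hb₁sup
  have heb₁u' : s(b₁, u') ∈ c.edges := by rwa [Sym2.eq_swap]
  have hmem' : s(b₁, b₀) ∈ c.edges := by rwa [Sym2.eq_swap]
  have hb₁nbrs : ∀ w, s(b₁, w) ∈ c.edges → w = u' ∨ w = b₀ :=
    aux_two_of hb₁uniq heb₁u' hmem' (Ne.symm hu'b₀).symm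
  -- closure
  have hclosed : ∀ v ∈ ({x | x = u ∨ x = u' ∨ x = b₀ ∨ x = b₁} : Set (Fin 2 × Fin k)),
      ∀ w, s(v, w) ∈ c.edges → w ∈ ({x | x = u ∨ x = u' ∨ x = b₀ ∨ x = b₁} :
        Set (Fin 2 × Fin k)) := by
    intro v hv w hw
    simp only [Set.mem_setOf_eq] at hv ⊢
    rcases hv with rfl | rfl | rfl | rfl
    · rcases huuniq w hw with rfl | rfl <;> tauto
    · rcases hu'uniq' w hw with rfl | rfl <;> tauto
    · rcases hb₀nbrs w hw with rfl | rfl <;> tauto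
    · rcases hb₁nbrs w hw with rfl | rfl <;> tauto
  have hsub := aux_cycle_support_subset hc hu_sup (Or.inl rfl : u ∈ ({x | x = u ∨ x = u' ∨
    x = b₀ ∨ x = b₁} : Set (Fin 2 × Fin k))) hclosed
  have hnodup := hc.support_nodup
  have htail_len : c.support.tail.length = c.length := by
    have := c.length_support
    simp only [List.length_tail, this]
    omega
  have hsubfin : c.support.tail.toFinset ⊆ ({u, u', b₀, b₁} : Finset (Fin 2 × Fin k)) := by
    intro z hz
    have := hsub z (List.mem_of_mem_tail (List.mem_toFinset.mp hz))
    simp only [Set.mem_setOf_eq] at this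
    simp only [Finset.mem_insert, Finset.mem_singleton]
    tauto
  have h4 : ({u, u', b₀, b₁} : Finset (Fin 2 × Fin k)).card ≤ 4 := by
    refine le_trans (Finset.card_insert_le _ _) (Nat.succ_le_succ ?_)
    refine le_trans (Finset.card_insert_le _ _) (Nat.succ_le_succ ?_)
    refine le_trans (Finset.card_insert_le _ _) (Nat.succ_le_succ ?_)
    simp
  have hcard := List.toFinset_card_of_nodup hnodup
  have := Finset.card_le_card hsubfin
  omega

private lemma grid_pre {k : ℕ} (S : Set (Fin 2 × Fin k)) (t : Fin 2)
    (hrow : ∀ j : Fin k, ((t, j) : Fin 2 × Fin k) ∉ S) :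
    (((pathGraph 2).boxProd (pathGraph k)).induce Sᶜ).Preconnected := by
  have hmemrow : ∀ j : Fin k, ((t, j) : Fin 2 × Fin k) ∈ Sᶜ := fun j => hrow j
  have step : ∀ z : (Sᶜ : Set (Fin 2 × Fin k)),
      (((pathGraph 2).boxProd (pathGraph k)).induce Sᶜ).Reachable z ⟨(t, z.1.2), hmemrow _⟩ := by
    intro z
    by_cases hz : z.1.1 = t
    · have : z = ⟨(t, z.1.2), hmemrow _⟩ := Subtype.ext (Prod.ext hz rfl)
      rw [this]
    · apply SimpleGraph.Adj.reachable
      have : ((pathGraph 2).boxProd (pathGraph k)).Adj z.1 (t, z.1.2) :=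
        grid_adj.mpr (Or.inl ⟨hz, rfl⟩)
      simpa using this
  have aux0 : ∀ (m : ℕ) (hm : m < k),
      (((pathGraph 2).boxProd (pathGraph k)).induce Sᶜ).Reachable
        ⟨(t, ⟨m, hm⟩), hmemrow _⟩ ⟨(t, ⟨0, Nat.lt_of_le_of_lt (Nat.zero_le m) hm⟩), hmemrow _⟩ := by
    intro m
    induction m with
    | zero => intro hm; rfl
    | succ m ih =>
      intro hm
      have hm' : m < k := Nat.lt_of_succ_lt hm
      refine Reachable.trans ?_ (ih hm')
      apply SimpleGraph.Adj.reachable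
      have : ((pathGraph 2).boxProd (pathGraph k)).Adj (t, ⟨m + 1, hm⟩) (t, ⟨m, hm'⟩) :=
        grid_adj.mpr (Or.inr ⟨Or.inr rfl, rfl⟩)
      simpa using this
  intro x y
  refine (step x).trans (Reachable.trans ?_ (step y).symm)
  have h1 := aux0 x.1.2.val x.1.2.isLt
  have h2 := aux0 y.1.2.val y.1.2.isLt
  exact h1.trans h2.symm

private lemma path_deg {k : ℕ} (i : Fin k) [Fintype ((pathGraph k).neighborSet i)] :
    (pathGraph k).degree i =
      (if i.val + 1 < k then 1 else 0) + (if 0 < i.val then 1 else 0) := by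
  classical
  have hik := i.isLt
  show ((pathGraph k).neighborFinset i).card = _
  by_cases h1 : i.val + 1 < k <;> by_cases h2 : 0 < i.val
  · rw [if_pos h1, if_pos h2]
    have : (pathGraph k).neighborFinset i = {⟨i.val + 1, h1⟩, ⟨i.val - 1, by omega⟩} := by
      ext j
      simp only [mem_neighborFinset, pathGraph_adj, Finset.mem_insert, Finset.mem_singleton,
        Fin.ext_iff]
      have := j.isLt
      omega
    rw [this, Finset.card_pair (by simp only [ne_eq, Fin.ext_iff]; omega)]
  · rw [if_pos h1, if_neg h2]
    have : (pathGraph k).neighborFinset i = {⟨i.val + 1, h1⟩} := by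
      ext j
      simp only [mem_neighborFinset, pathGraph_adj, Finset.mem_singleton, Fin.ext_iff]
      have := j.isLt
      omega
    rw [this, Finset.card_singleton]
  · rw [if_neg h1, if_pos h2]
    have : (pathGraph k).neighborFinset i = {⟨i.val - 1, by omega⟩} := by
      ext j
      simp only [mem_neighborFinset, pathGraph_adj, Finset.mem_singleton, Fin.ext_iff]
      have := j.isLt
      omega
    rw [this, Finset.card_singleton]
  · rw [if_neg h1, if_neg h2]
    have : (pathGraph k).neighborFinset i = ∅ := by
      ext j
      simp only [mem_neighborFinset, pathGraph_adj, Finset.notMem_empty, iff_false]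
      have := j.isLt
      omega
    rw [this, Finset.card_empty]

private lemma path_deg_sum {k : ℕ} (hk : 1 ≤ k) [DecidableRel (pathGraph k).Adj] :
    ∑ i : Fin k, (pathGraph k).degree i = 2 * k - 2 := by
  classical
  rw [Finset.sum_congr rfl (fun i _ => path_deg i)]
  rw [Finset.sum_add_distrib]
  have e1 : ∑ i : Fin k, (if i.val + 1 < k then (1 : ℕ) else 0) = k - 1 := by
    rw [Fin.sum_univ_eq_sum_range (fun i => if i + 1 < k then (1 : ℕ) else 0) k]
    rw [Finset.sum_boole]
    have : (Finset.range k).filter (fun i => i + 1 < k) = Finset.range (k - 1) := by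
      ext j
      simp only [Finset.mem_filter, Finset.mem_range]
      omega
    rw [this]
    simp
  have e2 : ∑ i : Fin k, (if 0 < i.val then (1 : ℕ) else 0) = k - 1 := by
    rw [Fin.sum_univ_eq_sum_range (fun i => if 0 < i then (1 : ℕ) else 0) k]
    rw [Finset.sum_boole]
    have : (Finset.range k).filter (fun i => 0 < i) = Finset.Ico 1 k := by
      ext j
      simp only [Finset.mem_filter, Finset.mem_range, Finset.mem_Ico]
      omega
    rw [this]
    simp
  rw [e1, e2]
  omega

private lemma grid_count {k : ℕ} (hk : 1 ≤ k) :
    2 * ((pathGraph 2).boxProd (pathGraph k)).edgeSet.ncard = 6 * k - 4 := by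
  classical
  have hcard : ((pathGraph 2).boxProd (pathGraph k)).edgeSet.ncard =
      ((pathGraph 2).boxProd (pathGraph k)).edgeFinset.card := by
    rw [Set.ncard_eq_toFinset_card']
    congr 1
  rw [hcard, ← SimpleGraph.sum_degrees_eq_twice_card_edges]
  rw [Fintype.sum_prod_type]
  refine Eq.trans (b := ∑ x : Fin 2, ∑ y : Fin k,
      ((pathGraph 2).degree x + (pathGraph k).degree y)) ?_ ?_
  · refine Finset.sum_congr rfl fun x _ => Finset.sum_congr rfl fun y _ => ?_
    convert SimpleGraph.degree_boxProd ((x, y) : Fin 2 × Fin k) using 2 <;>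
      exact Subsingleton.elim _ _
  have hd2 : ∀ x : Fin 2, (pathGraph 2).degree x = 1 := by
    intro x
    rw [path_deg]
    fin_cases x <;> norm_num
  have hD2 := path_deg_sum (k := k) hk
  calc ∑ x : Fin 2, ∑ y : Fin k, ((pathGraph 2).degree x + (pathGraph k).degree y)
      = ∑ x : Fin 2, (k * (pathGraph 2).degree x + (2 * k - 2)) := by
        refine Finset.sum_congr rfl fun x _ => ?_
        rw [Finset.sum_add_distrib, Finset.sum_const, Finset.card_univ, Fintype.card_fin,
          smul_eq_mul, hD2]
    _ = 6 * k - 4 := by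
        simp only [hd2, mul_one]
        rw [Finset.sum_const, Finset.card_univ, Fintype.card_fin, smul_eq_mul]
        omega

theorem stmt11 (n : ℕ) (hn : 4 ≤ n) (heven : Even n) :
    ((pathGraph 2).boxProd (pathGraph (n / 2))).ChordalBipartite ∧
    2 ≤ ((pathGraph 2).boxProd (pathGraph (n / 2))).vertexConnectivity ∧
    Nat.card (Fin 2 × Fin (n / 2)) = n ∧
    2 * ((pathGraph 2).boxProd (pathGraph (n / 2))).edgeSet.ncard = 3 * n - 4 := by
  have hk : 2 ≤ n / 2 := by omega
  have hn2 : n % 2 = 0 := Nat.even_iff.mp heven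
  refine ⟨⟨?_, fun a c hc hlen => grid_chord c hc hlen⟩, ?_, ?_, ?_⟩
  · -- 2-colorable
    refine ⟨SimpleGraph.Coloring.mk
      (fun v => ⟨(v.1.val + v.2.val) % 2, by omega⟩) ?_⟩
    intro v w h hfeq
    have h1v := v.1.isLt
    have h1w := w.1.isLt
    have hfeq' : (v.1.val + v.2.val) % 2 = (w.1.val + w.2.val) % 2 := congrArg Fin.val hfeq
    rcases grid_adj.mp h with ⟨h1, h2⟩ | ⟨h1, h2⟩
    · have hne : v.1.val ≠ w.1.val := fun hh => h1 (Fin.ext hh)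
      have h2v : v.2.val = w.2.val := congrArg Fin.val h2
      omega
    · have h2v : v.1.val = w.1.val := congrArg Fin.val h2
      omega
  · -- vertex connectivity at least 2
    unfold SimpleGraph.vertexConnectivity
    split_ifs with h
    · obtain ⟨S₀, hS₀⟩ := h
      have hne : {m | ∃ S : Set (Fin 2 × Fin (n / 2)), S.ncard = m ∧
          ((pathGraph 2).boxProd (pathGraph (n / 2))).IsVertexCutSet S}.Nonempty :=
        ⟨S₀.ncard, S₀, rfl, hS₀⟩
      obtain ⟨S, hScard, hScut⟩ := Nat.sInf_mem hne
      rw [← hScard]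
      by_contra hlt
      push_neg at hlt
      have hcases : S.ncard = 0 ∨ S.ncard = 1 := by omega
      rcases hcases with h0 | h1
      · have hS : S = ∅ := (Set.ncard_eq_zero (Set.toFinite S)).mp h0
        subst hS
        exact hScut (grid_pre ∅ 0 (by simp))
      · obtain ⟨v, rfl⟩ := Set.ncard_eq_one.mp h1
        obtain ⟨t, ht⟩ : ∃ t : Fin 2, t ≠ v.1 := by
          by_cases h' : v.1 = 0
          · exact ⟨1, by rw [h']; decide⟩
          · exact ⟨0, Ne.symm h'⟩
        refine absurd (grid_pre {v} t ?_) hScut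
        intro j hj
        rw [Set.mem_singleton_iff] at hj
        exact ht (congrArg Prod.fst hj)
    · have hcard : Nat.card (Fin 2 × Fin (n / 2)) = 2 * (n / 2) := by
        simp [Nat.card_eq_fintype_card]
      rw [hcard]
      omega
  · -- vertex count
    have hcard : Nat.card (Fin 2 × Fin (n / 2)) = 2 * (n / 2) := by
      simp [Nat.card_eq_fintype_card]
    rw [hcard]
    omega
  · -- edge count
    have := grid_count (k := n / 2) (by omega)
    omega
end

section
/- Let G be a 2-connected chordal bipartite graph, uv a bisimplicial edge of G such that G ⊖ uv has a cut vertex s with N_G(v)\{u} = {s}. Then for every connected component F of (G ⊖ uv) − s, the vertex u has a neighbor in F. -/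
open SimpleGraph

variable {V : Type*}

theorem stmt14 [Finite V] (G : SimpleGraph V) (hcb : G.ChordalBipartite)
    (h2 : 2 ≤ G.vertexConnectivity) (u v s : V)
    (huv : G.IsBisimplicialEdge u v) (hs : s ∈ (({u, v} : Set V)ᶜ))
    (hcut : ¬ (G.induce (({u, v, s} : Set V)ᶜ)).Preconnected)
    (hNv : G.neighborSet v \ {u} = {s}) :
    ∀ c : (G.induce (({u, v, s} : Set V)ᶜ)).ConnectedComponent,
      ∃ x, ∃ hx : x ∈ (({u, v, s} : Set V)ᶜ),
        G.Adj u x ∧ (⟨x, hx⟩ : (({u, v, s} : Set V)ᶜ : Set V)) ∈ c.supp := by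
  classical
  intro c
  by_contra hcon
  push_neg at hcon
  simp only [SimpleGraph.ConnectedComponent.mem_supp_iff] at hcon
  obtain ⟨w, hwc⟩ := c.exists_rep
  have hsu : s ≠ u := by intro h; apply hs; left; exact h
  have hsv : s ≠ v := by intro h; apply hs; right; exact h
  set P : V → Prop := fun x => ∃ hx : x ∈ (({u, v, s} : Set V)ᶜ),
    (G.induce (({u, v, s} : Set V)ᶜ)).connectedComponentMk ⟨x, hx⟩ = c with hP
  have step : ∀ (a b : ↥(({s} : Set V)ᶜ)), (G.induce ({s} : Set V)ᶜ).Adj a b →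
      P a.val → P b.val := by
    rintro ⟨a, ha⟩ ⟨b, hb⟩ hadj ⟨haA, hacomp⟩
    have hGab : G.Adj a b := hadj
    have hbs : b ≠ s := by simpa using hb
    have hbu : b ≠ u := by
      intro h
      rw [h] at hGab
      exact hcon a haA hGab.symm hacomp
    have hbv : b ≠ v := by
      intro h
      rw [h] at hGab
      have : a ∈ G.neighborSet v \ {u} := by
        refine ⟨hGab.symm, ?_⟩
        simp only [Set.mem_singleton_iff]
        intro h'
        exact haA (by simp [h'])
      rw [hNv] at this
      exact haA (by simp [Set.mem_singleton_iff.mp this])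
    have hbA : b ∈ (({u, v, s} : Set V)ᶜ) := by
      simp only [Set.mem_compl_iff, Set.mem_insert_iff, Set.mem_singleton_iff]
      push_neg
      exact ⟨hbu, hbv, hbs⟩
    refine ⟨hbA, ?_⟩
    have hadj' : (G.induce (({u, v, s} : Set V)ᶜ)).Adj ⟨a, haA⟩ ⟨b, hbA⟩ := hGab
    rw [← hacomp]
    exact SimpleGraph.ConnectedComponent.sound hadj'.symm.reachable
  have walkP : ∀ (a b : ↥(({s} : Set V)ᶜ)) (p : (G.induce ({s} : Set V)ᶜ).Walk a b),
      P a.val → P b.val := by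
    intro a b p
    induction p with
    | nil => exact id
    | cons h p ih => intro ha; exact ih (step _ _ h ha)
  have hcut1 : G.IsVertexCutSet ({s} : Set V) := by
    intro hpre
    have hwA : (w : V) ∈ (({u, v, s} : Set V)ᶜ) := w.prop
    have hws : (w : V) ∈ ({s} : Set V)ᶜ := by
      intro h
      exact hwA (by simp [Set.mem_singleton_iff.mp h])
    have hus : u ∈ ({s} : Set V)ᶜ := by simpa using hsu.symm
    obtain ⟨p⟩ := hpre ⟨w, hws⟩ ⟨u, hus⟩
    have hPw : P w := ⟨hwA, by rw [← hwc]; congr⟩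
    obtain ⟨huA, -⟩ := walkP _ _ p hPw
    exact huA (by simp)
  have hle : G.vertexConnectivity ≤ 1 := by
    rw [SimpleGraph.vertexConnectivity, if_pos ⟨_, hcut1⟩]
    exact Nat.sInf_le ⟨{s}, by simp, hcut1⟩
  omega
end

section
/- Let G be a 2-connected chordal bipartite graph, uv a bisimplicial edge of G such that G ⊖ uv has a cut vertex s with N_G(v)\{u} = {s}. Then G − v is 2-connected. -/
open SimpleGraph

variable {V : Type*}

/-- If the vertex connectivity is at least `2`, then deleting at most one vertex keeps the
graph preconnected. -/
private lemma small_noncut [Finite V] {G : SimpleGraph V} (h2 : 2 ≤ G.vertexConnectivity)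
    (S : Set V) (hS : S.ncard ≤ 1) : (G.induce Sᶜ).Preconnected := by
  classical
  by_contra h
  have hex : ∃ T : Set V, G.IsVertexCutSet T := ⟨S, h⟩
  unfold SimpleGraph.vertexConnectivity at h2
  rw [if_pos hex] at h2
  have hmem : S.ncard ∈ {n | ∃ T : Set V, T.ncard = n ∧ G.IsVertexCutSet T} := ⟨S, rfl, h⟩
  have := Nat.sInf_le hmem
  omega

/-- Removing a vertex all of whose distinct neighbour pairs remain reachable keeps
reachability. -/
private lemma bypass_aux {W : Type*} (H : SimpleGraph W) (v₀ : W)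
    (hnb : ∀ (x y : W) (hx : x ∈ ({v₀}ᶜ : Set W)) (hy : y ∈ ({v₀}ᶜ : Set W)),
      H.Adj v₀ x → H.Adj v₀ y →
      (H.induce ({v₀}ᶜ : Set W)).Reachable ⟨x, hx⟩ ⟨y, hy⟩)
    {b : W} (hb : b ∈ ({v₀}ᶜ : Set W)) :
    ∀ (n : ℕ) {a : W} (ha : a ∈ ({v₀}ᶜ : Set W)) (p : H.Walk a b), p.length ≤ n →
      (H.induce ({v₀}ᶜ : Set W)).Reachable ⟨a, ha⟩ ⟨b, hb⟩ := by
  intro n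
  induction n with
  | zero =>
    intro a ha p hp
    cases p with
    | nil => exact Reachable.refl _
    | cons h q => simp [SimpleGraph.Walk.length_cons] at hp
  | succ n ih =>
    intro a ha p hp
    cases p with
    | nil => exact Reachable.refl _
    | @cons _ c _ h q =>
      by_cases hc : c = v₀
      · subst hc
        cases q with
        | nil => exact absurd rfl hb
        | @cons _ d _ h2 r =>
          have hd : d ∈ ({c}ᶜ : Set W) := Set.mem_compl_singleton_iff.mpr h2.ne'
          have r1 := hnb a d ha hd h.symm h2
          have hlen : r.length ≤ n := by
            simp only [SimpleGraph.Walk.length_cons] at hp; omega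
          exact r1.trans (ih hd r hlen)
      · have hc' : c ∈ ({v₀}ᶜ : Set W) := Set.mem_compl_singleton_iff.mpr hc
        have hadj : (H.induce ({v₀}ᶜ : Set W)).Adj ⟨a, ha⟩ ⟨c, hc'⟩ := h
        have hlen : q.length ≤ n := by
          simp only [SimpleGraph.Walk.length_cons] at hp; omega
        exact hadj.reachable.trans (ih hc' q hlen)

private lemma bypass {W : Type*} (H : SimpleGraph W) (v₀ : W)
    (hnb : ∀ (x y : W) (hx : x ∈ ({v₀}ᶜ : Set W)) (hy : y ∈ ({v₀}ᶜ : Set W)),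
      H.Adj v₀ x → H.Adj v₀ y →
      (H.induce ({v₀}ᶜ : Set W)).Reachable ⟨x, hx⟩ ⟨y, hy⟩)
    {a b : W} (ha : a ∈ ({v₀}ᶜ : Set W)) (hb : b ∈ ({v₀}ᶜ : Set W))
    (hr : H.Reachable a b) :
    (H.induce ({v₀}ᶜ : Set W)).Reachable ⟨a, ha⟩ ⟨b, hb⟩ := by
  obtain ⟨p⟩ := hr
  exact bypass_aux H v₀ hnb hb p.length ha p le_rfl

section Main

variable [Finite V] {G : SimpleGraph V} {u v s : V}

/-- Under the hypotheses of the theorem, `u` and `s` are reachable in `G - {v, w}`. -/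
private lemma us_reach (h2 : 2 ≤ G.vertexConnectivity)
    (hbis : ∀ x y, G.Adj u x → G.Adj v y → x ≠ y → G.Adj x y)
    (hadj : G.Adj u v) (hvs : G.Adj v s) (hus : u ≠ s)
    (hNv : ∀ x, G.Adj v x → x = u ∨ x = s)
    (hcut : ¬ (G.induce (({u, v, s} : Set V)ᶜ)).Preconnected)
    {w : V} (huw : u ≠ w) (hsw : s ≠ w)
    (hu : u ∈ (({v, w} : Set V)ᶜ)) (hsm : s ∈ (({v, w} : Set V)ᶜ)) :
    (G.induce (({v, w} : Set V)ᶜ)).Reachable ⟨u, hu⟩ ⟨s, hsm⟩ := by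
  classical
  by_cases hx : ∃ x, G.Adj u x ∧ x ≠ v ∧ x ≠ w
  · obtain ⟨x, hux, hxv, hxw⟩ := hx
    by_cases hxs : x = s
    · exact (show (G.induce (({v, w} : Set V)ᶜ)).Adj ⟨u, hu⟩ ⟨s, hsm⟩ from hxs ▸ hux).reachable
    · have hxs' : G.Adj x s := hbis x s hux hvs hxs
      have hxm : x ∈ (({v, w} : Set V)ᶜ) := by simp [hxv, hxw]
      exact (show (G.induce (({v, w} : Set V)ᶜ)).Adj ⟨u, hu⟩ ⟨x, hxm⟩ from hux).reachable.trans
        (show (G.induce (({v, w} : Set V)ᶜ)).Adj ⟨x, hxm⟩ ⟨s, hsm⟩ from hxs').reachable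
  · push_neg at hx
    exfalso
    apply hcut
    intro a' b'
    obtain ⟨a, hamem⟩ := a'
    obtain ⟨b, hbmem⟩ := b'
    have hau : a ≠ u := fun h => hamem (by simp [h])
    have hav : a ≠ v := fun h => hamem (by simp [h])
    have has : a ≠ s := fun h => hamem (by simp [h])
    have hbu : b ≠ u := fun h => hbmem (by simp [h])
    have hbv : b ≠ v := fun h => hbmem (by simp [h])
    have hbs : b ≠ s := fun h => hbmem (by simp [h])
    have hvns : v ≠ s := hvs.ne
    -- Step 1 : reachability in `G - s`
    have h1 : (G.induce ({s}ᶜ : Set V)).Preconnected := small_noncut h2 {s} (by simp)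
    set H1 := G.induce ({s}ᶜ : Set V) with hH1
    have hvmem : v ∈ ({s}ᶜ : Set V) := Set.mem_compl_singleton_iff.mpr hvns
    set v₁ : ↥({s}ᶜ : Set V) := (⟨v, hvmem⟩ : ↥({s}ᶜ : Set V)) with hv₁
    -- Step 2 : bypass `v`
    have hnb1 : ∀ (x y : ↥({s}ᶜ : Set V)) (hx : x ∈ ({v₁}ᶜ : Set ↥({s}ᶜ : Set V)))
        (hy : y ∈ ({v₁}ᶜ : Set ↥({s}ᶜ : Set V))), H1.Adj v₁ x → H1.Adj v₁ y →
        (H1.induce ({v₁}ᶜ : Set ↥({s}ᶜ : Set V))).Reachable ⟨x, hx⟩ ⟨y, hy⟩ := by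
      intro x y hx' hy' hx1 hy1
      have hxu : x.val = u := by
        rcases hNv x.val hx1 with h | h
        · exact h
        · exact absurd h (Set.mem_compl_singleton_iff.mp x.prop)
      have hyu : y.val = u := by
        rcases hNv y.val hy1 with h | h
        · exact h
        · exact absurd h (Set.mem_compl_singleton_iff.mp y.prop)
      have hxy : (⟨x, hx'⟩ : ↥({v₁}ᶜ : Set ↥({s}ᶜ : Set V))) = ⟨y, hy'⟩ :=
        Subtype.ext (Subtype.ext (hxu.trans hyu.symm))
      rw [hxy]
    have ha1 : a ∈ ({s}ᶜ : Set V) := Set.mem_compl_singleton_iff.mpr has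
    have hb1 : b ∈ ({s}ᶜ : Set V) := Set.mem_compl_singleton_iff.mpr hbs
    have hav1 : (⟨a, ha1⟩ : ↥({s}ᶜ : Set V)) ∈ ({v₁}ᶜ : Set ↥({s}ᶜ : Set V)) :=
      fun h => hav (congrArg Subtype.val h)
    have hbv1 : (⟨b, hb1⟩ : ↥({s}ᶜ : Set V)) ∈ ({v₁}ᶜ : Set ↥({s}ᶜ : Set V)) :=
      fun h => hbv (congrArg Subtype.val h)
    have r2 := bypass H1 v₁ hnb1 hav1 hbv1 (h1 ⟨a, ha1⟩ ⟨b, hb1⟩)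
    -- Step 3 : bypass `u`
    set H2 := H1.induce ({v₁}ᶜ : Set ↥({s}ᶜ : Set V)) with hH2
    have humem1 : u ∈ ({s}ᶜ : Set V) := Set.mem_compl_singleton_iff.mpr hus
    have humem2 : (⟨u, humem1⟩ : ↥({s}ᶜ : Set V)) ∈ ({v₁}ᶜ : Set ↥({s}ᶜ : Set V)) :=
      fun h => hadj.ne (congrArg Subtype.val h)
    set u₂ := (⟨⟨u, humem1⟩, humem2⟩ : ↥({v₁}ᶜ : Set ↥({s}ᶜ : Set V))) with hu₂
    have hnb2 : ∀ (x y : ↥({v₁}ᶜ : Set ↥({s}ᶜ : Set V)))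
        (hx : x ∈ ({u₂}ᶜ : Set _)) (hy : y ∈ ({u₂}ᶜ : Set _)),
        H2.Adj u₂ x → H2.Adj u₂ y →
        (H2.induce ({u₂}ᶜ : Set _)).Reachable ⟨x, hx⟩ ⟨y, hy⟩ := by
      intro x y hx' hy' hx2 hy2
      have hxw : x.val.val = w :=
        hx x.val.val hx2 (fun h => x.prop (Subtype.ext h))
      have hyw : y.val.val = w :=
        hx y.val.val hy2 (fun h => y.prop (Subtype.ext h))
      have hxy : (⟨x, hx'⟩ : ↥({u₂}ᶜ : Set _)) = ⟨y, hy'⟩ :=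
        Subtype.ext (Subtype.ext (Subtype.ext (hxw.trans hyw.symm)))
      rw [hxy]
    have hau2 : (⟨⟨a, ha1⟩, hav1⟩ : ↥({v₁}ᶜ : Set ↥({s}ᶜ : Set V))) ∈ ({u₂}ᶜ : Set _) :=
      fun h => hau (congrArg Subtype.val (congrArg Subtype.val h))
    have hbu2 : (⟨⟨b, hb1⟩, hbv1⟩ : ↥({v₁}ᶜ : Set ↥({s}ᶜ : Set V))) ∈ ({u₂}ᶜ : Set _) :=
      fun h => hbu (congrArg Subtype.val (congrArg Subtype.val h))
    have r3 := bypass H2 u₂ hnb2 hau2 hbu2 r2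
    -- Step 4 : map into `G - {u, v, s}`
    let f : (H2.induce ({u₂}ᶜ : Set _)) →g (G.induce (({u, v, s} : Set V)ᶜ)) :=
      ⟨fun z => ⟨z.val.val.val, by
          have h1 : z.val.val.val ≠ u := fun h => z.prop (Subtype.ext (Subtype.ext h))
          have h2 : z.val.val.val ≠ v := fun h => z.val.prop (Subtype.ext h)
          have h3 : z.val.val.val ≠ s := Set.mem_compl_singleton_iff.mp z.val.val.prop
          simp [h1, h2, h3]⟩,
        fun h => h⟩
    exact r3.map f

/-- `G - {v, w}` is preconnected for every `w`. -/
private lemma main_precon (h2 : 2 ≤ G.vertexConnectivity)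
    (hbis : ∀ x y, G.Adj u x → G.Adj v y → x ≠ y → G.Adj x y)
    (hadj : G.Adj u v) (hvs : G.Adj v s) (hus : u ≠ s)
    (hNv : ∀ x, G.Adj v x → x = u ∨ x = s)
    (hcut : ¬ (G.induce (({u, v, s} : Set V)ᶜ)).Preconnected)
    (w : V) : (G.induce (({v, w} : Set V)ᶜ)).Preconnected := by
  classical
  by_cases hwv : w = v
  · subst hwv
    have hset : ({w, w} : Set V) = {w} := by simp
    rw [hset]
    exact small_noncut h2 {w} (by simp)
  · intro A B
    obtain ⟨a, hamem⟩ := A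
    obtain ⟨b, hbmem⟩ := B
    have hav : a ≠ v := fun h => hamem (by simp [h])
    have haw : a ≠ w := fun h => hamem (by simp [h])
    have hbv : b ≠ v := fun h => hbmem (by simp [h])
    have hbw : b ≠ w := fun h => hbmem (by simp [h])
    set H := G.induce ({w}ᶜ : Set V) with hH
    have hvw : v ∈ ({w}ᶜ : Set V) := Set.mem_compl_singleton_iff.mpr (Ne.symm hwv)
    set v₁ := (⟨v, hvw⟩ : ↥({w}ᶜ : Set V)) with hv₁
    have hnb : ∀ (x y : ↥({w}ᶜ : Set V)) (hx : x ∈ ({v₁}ᶜ : Set ↥({w}ᶜ : Set V)))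
        (hy : y ∈ ({v₁}ᶜ : Set ↥({w}ᶜ : Set V))), H.Adj v₁ x → H.Adj v₁ y →
        (H.induce ({v₁}ᶜ : Set ↥({w}ᶜ : Set V))).Reachable ⟨x, hx⟩ ⟨y, hy⟩ := by
      intro x y hx hy hx1 hy1
      have hxw : x.val ≠ w := Set.mem_compl_singleton_iff.mp x.prop
      have hyw : y.val ≠ w := Set.mem_compl_singleton_iff.mp y.prop
      let g : (G.induce (({v, w} : Set V)ᶜ)) →g (H.induce ({v₁}ᶜ : Set ↥({w}ᶜ : Set V))) :=
        ⟨fun z => ⟨⟨z.val, fun h => z.prop (by simp [h])⟩,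
           fun h => z.prop (by
             have hzv : z.val = v := congrArg Subtype.val (Set.mem_singleton_iff.mp h)
             simp [hzv])⟩,
         fun h => h⟩
      rcases hNv x.val hx1 with hxu | hxs <;> rcases hNv y.val hy1 with hyu | hys
      · have hxy : (⟨x, hx⟩ : ↥({v₁}ᶜ : Set ↥({w}ᶜ : Set V))) = ⟨y, hy⟩ :=
          Subtype.ext (Subtype.ext (hxu.trans hyu.symm))
        rw [hxy]
      · have huw' : u ≠ w := hxu ▸ hxw
        have hsw' : s ≠ w := hys ▸ hyw
        have hum : u ∈ (({v, w} : Set V)ᶜ) := by simp [hadj.ne, huw']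
        have hsm : s ∈ (({v, w} : Set V)ᶜ) := by simp [hvs.ne', hsw']
        have r := us_reach h2 hbis hadj hvs hus hNv hcut huw' hsw' hum hsm
        have := r.map g
        have e1 : g ⟨u, hum⟩ = ⟨x, hx⟩ := Subtype.ext (Subtype.ext hxu.symm)
        have e2 : g ⟨s, hsm⟩ = ⟨y, hy⟩ := Subtype.ext (Subtype.ext hys.symm)
        rwa [e1, e2] at this
      · have huw' : u ≠ w := hyu ▸ hyw
        have hsw' : s ≠ w := hxs ▸ hxw
        have hum : u ∈ (({v, w} : Set V)ᶜ) := by simp [hadj.ne, huw']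
        have hsm : s ∈ (({v, w} : Set V)ᶜ) := by simp [hvs.ne', hsw']
        have r := (us_reach h2 hbis hadj hvs hus hNv hcut huw' hsw' hum hsm).symm
        have := r.map g
        have e1 : g ⟨s, hsm⟩ = ⟨x, hx⟩ := Subtype.ext (Subtype.ext hxs.symm)
        have e2 : g ⟨u, hum⟩ = ⟨y, hy⟩ := Subtype.ext (Subtype.ext hyu.symm)
        rwa [e1, e2] at this
      · have hxy : (⟨x, hx⟩ : ↥({v₁}ᶜ : Set ↥({w}ᶜ : Set V))) = ⟨y, hy⟩ :=
          Subtype.ext (Subtype.ext (hxs.trans hys.symm))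
        rw [hxy]
    have hP : H.Preconnected := small_noncut h2 {w} (by simp)
    have ha1 : a ∈ ({w}ᶜ : Set V) := Set.mem_compl_singleton_iff.mpr haw
    have hb1 : b ∈ ({w}ᶜ : Set V) := Set.mem_compl_singleton_iff.mpr hbw
    have hav1 : (⟨a, ha1⟩ : ↥({w}ᶜ : Set V)) ∈ ({v₁}ᶜ : Set ↥({w}ᶜ : Set V)) :=
      fun h => hav (congrArg Subtype.val h)
    have hbv1 : (⟨b, hb1⟩ : ↥({w}ᶜ : Set V)) ∈ ({v₁}ᶜ : Set ↥({w}ᶜ : Set V)) :=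
      fun h => hbv (congrArg Subtype.val h)
    have r := bypass H v₁ hnb hav1 hbv1 (hP ⟨a, ha1⟩ ⟨b, hb1⟩)
    let f : (H.induce ({v₁}ᶜ : Set ↥({w}ᶜ : Set V))) →g (G.induce (({v, w} : Set V)ᶜ)) :=
      ⟨fun z => ⟨z.val.val, by
          have h1 : z.val.val ≠ v := fun h => z.prop (Subtype.ext h)
          have h2 : z.val.val ≠ w := Set.mem_compl_singleton_iff.mp z.val.prop
          simp [h1, h2]⟩,
        fun h => h⟩
    exact r.map f

end Main


theorem stmt16 [Finite V] (G : SimpleGraph V) (hcb : G.ChordalBipartite)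
    (h2 : 2 ≤ G.vertexConnectivity) (u v s : V)
    (huv : G.IsBisimplicialEdge u v) (hs : s ∈ (({u, v} : Set V)ᶜ))
    (hcut : ¬ (G.induce (({u, v, s} : Set V)ᶜ)).Preconnected)
    (hNv : G.neighborSet v \ {u} = {s}) :
    2 ≤ (G.induce ({v}ᶜ : Set V)).vertexConnectivity := by
  classical
  obtain ⟨hadj, hbis⟩ := huv
  have hsu : s ≠ u := fun h => hs (by simp [h])
  have hsv : s ≠ v := fun h => hs (by simp [h])
  have hvs : G.Adj v s := by
    have hmem : s ∈ G.neighborSet v \ {u} := by rw [hNv]; rfl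
    exact hmem.1
  have hNv' : ∀ x, G.Adj v x → x = u ∨ x = s := by
    intro x hx
    by_cases hxu : x = u
    · exact Or.inl hxu
    · right
      have hmem : x ∈ G.neighborSet v \ {u} := ⟨hx, hxu⟩
      rw [hNv] at hmem
      exact hmem
  have main := main_precon h2 hbis hadj hvs hsu.symm hNv' hcut
  have hsome : ∃ a : V, a ≠ u ∧ a ≠ v ∧ a ≠ s := by
    by_contra hno
    push_neg at hno
    apply hcut
    intro x y
    exfalso
    obtain ⟨x, hx⟩ := x
    have hxs : x = s := hno x (fun h => hx (by simp [h])) (fun h => hx (by simp [h]))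
    exact hx (by simp [hxs])
  obtain ⟨a₀, ha₀u, ha₀v, ha₀s⟩ := hsome
  unfold SimpleGraph.vertexConnectivity
  split_ifs with hex
  · by_contra hlt
    push_neg at hlt
    have hne : {n | ∃ S, S.ncard = n ∧
        (G.induce ({v}ᶜ : Set V)).IsVertexCutSet S}.Nonempty :=
      ⟨hex.choose.ncard, hex.choose, rfl, hex.choose_spec⟩
    obtain ⟨S₁, hcard, hc1⟩ := Nat.sInf_mem hne
    apply hc1
    have hS1 : S₁.ncard ≤ 1 := by omega
    rcases (Set.ncard_le_one_iff_eq (Set.toFinite _)).mp hS1 with rfl | ⟨w', rfl⟩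
    · intro A B
      obtain ⟨⟨a, hav⟩, hA⟩ := A
      obtain ⟨⟨b, hbv⟩, hB⟩ := B
      have hav' : a ≠ v := fun h => hav (by simp [h])
      have hbv' : b ≠ v := fun h => hbv (by simp [h])
      have r := main v ⟨a, by simp [hav']⟩ ⟨b, by simp [hbv']⟩
      let f : (G.induce (({v, v} : Set V)ᶜ)) →g
          ((G.induce ({v}ᶜ : Set V)).induce ((∅ : Set ↥({v}ᶜ : Set V))ᶜ)) :=
        ⟨fun z => ⟨⟨z.val, fun h => z.prop (by simp [Set.mem_singleton_iff.mp h])⟩,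
            Set.notMem_empty _⟩, fun h => h⟩
      exact r.map f
    · intro A B
      obtain ⟨⟨a, hav⟩, hA⟩ := A
      obtain ⟨⟨b, hbv⟩, hB⟩ := B
      have hav' : a ≠ v := fun h => hav (by simp [h])
      have hbv' : b ≠ v := fun h => hbv (by simp [h])
      have haw' : a ≠ (w' : V) := fun h => hA (Set.mem_singleton_iff.mpr (Subtype.ext h))
      have hbw' : b ≠ (w' : V) := fun h => hB (Set.mem_singleton_iff.mpr (Subtype.ext h))
      have r := main (w' : V) ⟨a, by simp [hav', haw']⟩ ⟨b, by simp [hbv', hbw']⟩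
      let g : (G.induce (({v, (w' : V)} : Set V)ᶜ)) →g
          ((G.induce ({v}ᶜ : Set V)).induce (({w'} : Set ↥({v}ᶜ : Set V))ᶜ)) :=
        ⟨fun z => ⟨⟨z.val, fun h => z.prop (by simp [Set.mem_singleton_iff.mp h])⟩,
            fun h => z.prop (by
              have hzw : z.val = (w' : V) :=
                congrArg Subtype.val (Set.mem_singleton_iff.mp h)
              simp [hzw])⟩, fun h => h⟩
      exact r.map g
  · have hcard3 : 2 < Nat.card ↥({v}ᶜ : Set V) := by
      have : Fintype ↥({v}ᶜ : Set V) := Fintype.ofFinite _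
      rw [Nat.card_eq_fintype_card, Fintype.two_lt_card_iff]
      refine ⟨⟨u, by simp [hadj.ne]⟩, ⟨s, by simp [hsv]⟩, ⟨a₀, by simp [ha₀v]⟩, ?_, ?_, ?_⟩
      · exact fun h => hsu (congrArg Subtype.val h).symm
      · exact fun h => ha₀u (congrArg Subtype.val h).symm
      · exact fun h => ha₀s (congrArg Subtype.val h).symm
    omega
end
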